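/- arXiv:1610.08786 — 7 statements merged into one kernel-verified Lean document; each statement's English description precedes it below -/
import Mathlib

section
/- For 1 ≤ m ≤ n, the number of parking functions with m cars on the directed path with n spots is (n+1-m)(n+1)^{m-1}. -/
open Finset

/-- Partial-sum function: `A t = t - ∑_{u<t} g u` (in `ℤ`). -/
def Afun (g : ℕ → ℕ) : ℕ → ℤ := fun t => (t : ℤ) - ∑ u ∈ Finset.range t, (g u : ℤ)

/-- Windowed minimum of `Afun` over `[p, p+q']`. -/
def Mfun (g : ℕ → ℕ) (q' : ℕ) (p : ℕ) : ℤ :=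
  (Finset.range (q' + 1)).inf' Finset.nonempty_range_add_one (fun u => Afun g (p + u))

lemma Afun_succ (g : ℕ → ℕ) (t : ℕ) : Afun g (t + 1) = Afun g t + 1 - g t := by
  unfold Afun
  rw [Finset.sum_range_succ]
  push_cast
  ring

lemma sum_period (g : ℕ → ℕ) (q : ℕ) (hq : 0 < q) (hper : ∀ x, g (x + q) = g x) (t : ℕ) :
    ∑ u ∈ Finset.Ico t (t + q), g u = ∑ u ∈ Finset.range q, g u := by
  induction t with
  | zero => rw [Finset.range_eq_Ico]; norm_num
  | succ t ih =>
    have h1 : ∑ u ∈ Finset.Ico (t+1) (t + 1 + q), g u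
        = (∑ u ∈ Finset.Ico (t+1) (t + q), g u) + g (t + q) := by
      have e : t + 1 + q = (t + q) + 1 := by ring
      rw [e, Finset.sum_Ico_succ_top (by omega)]
    have h2 : ∑ u ∈ Finset.Ico t (t + q), g u
        = g t + ∑ u ∈ Finset.Ico (t+1) (t + q), g u := by
      rw [Finset.sum_eq_sum_Ico_succ_bot (by omega)]
    rw [h1, hper t, ← ih, h2]
    ring

lemma Afun_period (g : ℕ → ℕ) (q m : ℕ) (hq : 0 < q) (hper : ∀ x, g (x + q) = g x)
    (hsum : ∑ x ∈ Finset.range q, g x = m) (t : ℕ) :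
    Afun g (t + q) = Afun g t + ((q : ℤ) - m) := by
  have h : ∑ u ∈ Finset.range (t + q), (g u : ℤ)
      = (∑ u ∈ Finset.range t, (g u : ℤ)) + ∑ u ∈ Finset.Ico t (t + q), (g u : ℤ) := by
    rw [Finset.range_eq_Ico]
    rw [← Finset.sum_Ico_consecutive (fun u => (g u : ℤ)) (by omega : 0 ≤ t) (by omega : t ≤ t + q)]
    rw [Finset.range_eq_Ico]
  have h2 : ∑ u ∈ Finset.Ico t (t + q), (g u : ℤ) = (m : ℤ) := by
    have h3 := sum_period g q hq hper t
    rw [hsum] at h3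
    exact_mod_cast congrArg (Nat.cast : ℕ → ℤ) h3
  unfold Afun
  rw [h, h2]
  push_cast
  ring

section
variable (g : ℕ → ℕ) (q' : ℕ)

lemma Mfun_le (p u : ℕ) (hu : u ≤ q') : Mfun g q' p ≤ Afun g (p + u) :=
  Finset.inf'_le _ (Finset.mem_range.2 (by omega))

lemma Mfun_exists (p : ℕ) : ∃ u ≤ q', Mfun g q' p = Afun g (p + u) := by
  obtain ⟨u, hu, h⟩ := Finset.exists_mem_eq_inf' (Finset.nonempty_range_add_one (n := q'))
    (fun u => Afun g (p + u))
  exact ⟨u, Nat.lt_succ_iff.1 (Finset.mem_range.1 hu), h⟩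

lemma le_Mfun (p : ℕ) (c : ℤ) (h : ∀ u ≤ q', c ≤ Afun g (p + u)) : c ≤ Mfun g q' p :=
  Finset.le_inf' _ _ (fun u hu => h u (Nat.lt_succ_iff.1 (Finset.mem_range.1 hu)))

end

lemma cycle_count (q m : ℕ) (hm : m < q) (g : ℕ → ℕ) (hper : ∀ x, g (x + q) = g x)
    (hsum : ∑ x ∈ Finset.range q, g x = m) :
    ((Finset.range q).filter
        (fun p => ∀ t < q, (∑ u ∈ Finset.range (t + 1), g (u + p)) ≤ t)).card = q - m := by
  classical
  have hq : 0 < q := by omega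
  obtain ⟨q', rfl⟩ : ∃ q', q = q' + 1 := ⟨q - 1, by omega⟩
  set q := q' + 1 with hqdef
  -- key relation between the good condition and A
  have hAdiff : ∀ p t, Afun g (p + t + 1)
      = Afun g p + (t + 1) - ∑ u ∈ Finset.range (t + 1), (g (u + p) : ℤ) := by
    intro p t
    have hs : ∑ u ∈ Finset.range (p + t + 1), (g u : ℤ)
        = (∑ u ∈ Finset.range p, (g u : ℤ)) + ∑ u ∈ Finset.Ico p (p + t + 1), (g u : ℤ) := by
      rw [Finset.range_eq_Ico]
      rw [← Finset.sum_Ico_consecutive (fun u => (g u : ℤ)) (by omega : 0 ≤ p)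
        (by omega : p ≤ p + t + 1)]
      rw [Finset.range_eq_Ico]
    have hre : ∑ u ∈ Finset.Ico p (p + t + 1), (g u : ℤ)
        = ∑ u ∈ Finset.range (t + 1), (g (u + p) : ℤ) := by
      rw [Finset.sum_Ico_eq_sum_range]
      have e : p + t + 1 - p = t + 1 := by omega
      rw [e]
      exact Finset.sum_congr rfl (fun u _ => by rw [add_comm p u])
    unfold Afun
    rw [hs, hre]
    push_cast
    ring
  have hgood : ∀ p, (∀ t < q, (∑ u ∈ Finset.range (t + 1), g (u + p)) ≤ t)
      ↔ (∀ u ≤ q', Afun g p + 1 ≤ Afun g (p + 1 + u)) := by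
    intro p
    constructor
    · intro h u hu
      have h1 := h u (by omega)
      have h2 := hAdiff p u
      have h3 : (∑ v ∈ Finset.range (u + 1), (g (v + p) : ℤ)) ≤ u := by
        exact_mod_cast Nat.cast_le.2 h1
      have e : p + 1 + u = p + u + 1 := by ring
      rw [e, h2]
      omega
    · intro h t ht
      have h2 := hAdiff p t
      have h3 := h t (by omega)
      have e : p + 1 + t = p + t + 1 := by ring
      rw [e, h2] at h3
      have h4 : (∑ u ∈ Finset.range (t + 1), (g (u + p) : ℤ)) ≤ t := by omega
      exact_mod_cast h4
  have hAper : ∀ t, Afun g (t + q) = Afun g t + ((q : ℤ) - m) :=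
    Afun_period g q m hq hper hsum
  have hqm : (0:ℤ) < (q:ℤ) - m := by
    have : (m:ℤ) < q := by exact_mod_cast hm
    omega
  -- M monotone
  have hMmono : ∀ p, Mfun g q' p ≤ Mfun g q' (p + 1) := by
    intro p
    obtain ⟨u, hu, he⟩ := Mfun_exists g q' (p + 1)
    rcases Nat.lt_or_ge u q' with h | h
    · have h1 : Mfun g q' p ≤ Afun g (p + (u + 1)) := Mfun_le g q' p (u+1) (by omega)
      rw [he]
      have e : p + 1 + u = p + (u + 1) := by ring
      rw [e]
      exact h1
    · have hu' : u = q' := by omega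
      have e : p + 1 + u = p + q := by omega
      rw [he, e, hAper p]
      have h1 : Mfun g q' p ≤ Afun g (p + 0) := Mfun_le g q' p 0 (by omega)
      simp only [Nat.add_zero] at h1
      omega
  have hMsucc : ∀ p, Mfun g q' (p + 1) ≤ Mfun g q' p + 1 := by
    intro p
    obtain ⟨u, hu, he⟩ := Mfun_exists g q' p
    rcases Nat.eq_zero_or_pos u with h | h
    · subst h
      simp only [Nat.add_zero] at he
      have h1 : Mfun g q' (p+1) ≤ Afun g (p + 1 + 0) := Mfun_le g q' (p+1) 0 (by omega)
      simp only [Nat.add_zero] at h1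
      have h2 : Afun g (p + 1) = Afun g p + 1 - g p := Afun_succ g p
      have h3 : (0:ℤ) ≤ g p := by positivity
      rw [he]
      omega
    · have h1 : Mfun g q' (p+1) ≤ Afun g (p + 1 + (u - 1)) := Mfun_le g q' (p+1) (u-1) (by omega)
      have e : p + 1 + (u - 1) = p + u := by omega
      rw [e] at h1
      rw [he]
      omega
  -- good iff M jumps
  have hgoodM : ∀ p, (∀ t < q, (∑ u ∈ Finset.range (t + 1), g (u + p)) ≤ t)
      ↔ Mfun g q' (p + 1) = Mfun g q' p + 1 := by
    intro p
    rw [hgood p]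
    constructor
    · intro h
      have hMp1 : Afun g p + 1 ≤ Mfun g q' (p + 1) := le_Mfun g q' (p+1) _ h
      have hMpA : Mfun g q' p = Afun g p := by
        apply le_antisymm
        · have h1 := Mfun_le g q' p 0 (by omega)
          simpa using h1
        · apply le_Mfun
          intro u hu
          rcases Nat.eq_zero_or_pos u with h0 | h0
          · subst h0; simp
          · have h2 : Afun g p + 1 ≤ Afun g (p + 1 + (u - 1)) := h (u-1) (by omega)
            have e : p + 1 + (u - 1) = p + u := by omega
            rw [e] at h2
            omega
      have h3 := hMsucc p
      omega
    · intro h u hu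
      have hMpA : Mfun g q' p = Afun g p := by
        obtain ⟨v, hv, he⟩ := Mfun_exists g q' p
        rcases Nat.eq_zero_or_pos v with h0 | h0
        · subst h0; simpa using he
        · exfalso
          have h1 : Mfun g q' (p+1) ≤ Afun g (p + 1 + (v - 1)) := Mfun_le g q' (p+1) (v-1) (by omega)
          have e : p + 1 + (v - 1) = p + v := by omega
          rw [e, ← he] at h1
          omega
      have h2 : Mfun g q' (p + 1) ≤ Afun g (p + 1 + u) := Mfun_le g q' (p+1) u hu
      omega
  -- periodic shift of M
  have hMper : Mfun g q' q = Mfun g q' 0 + ((q:ℤ) - m) := by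
    apply le_antisymm
    · obtain ⟨u, hu, he⟩ := Mfun_exists g q' 0
      have h1 : Mfun g q' q ≤ Afun g (q + u) := Mfun_le g q' q u hu
      have e : q + u = u + q := by ring
      rw [e, hAper u] at h1
      simp only [Nat.zero_add] at he
      rw [he]
      omega
    · obtain ⟨u, hu, he⟩ := Mfun_exists g q' q
      have e : q + u = u + q := by omega
      rw [e, hAper u] at he
      have h1 : Mfun g q' 0 ≤ Afun g (0 + u) := Mfun_le g q' 0 u hu
      simp only [Nat.zero_add] at h1
      omega
  -- telescoping
  have htel : ∑ p ∈ Finset.range q, (Mfun g q' (p + 1) - Mfun g q' p)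
      = Mfun g q' q - Mfun g q' 0 := Finset.sum_range_sub (fun p => Mfun g q' p) q
  have hsum2 : ∑ p ∈ Finset.range q,
      (if (∀ t < q, (∑ u ∈ Finset.range (t + 1), g (u + p)) ≤ t) then (1:ℤ) else 0)
      = ((q:ℤ) - m) := by
    have hcong : ∀ p ∈ Finset.range q,
        (if (∀ t < q, (∑ u ∈ Finset.range (t + 1), g (u + p)) ≤ t) then (1:ℤ) else 0)
        = Mfun g q' (p + 1) - Mfun g q' p := by
      intro p _
      by_cases h : ∀ t < q, (∑ u ∈ Finset.range (t + 1), g (u + p)) ≤ t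
      · rw [if_pos h, (hgoodM p).1 h]; ring
      · rw [if_neg h]
        have h1 := hMmono p
        have h2 := hMsucc p
        have h3 : ¬ (Mfun g q' (p+1) = Mfun g q' p + 1) := fun hc => h ((hgoodM p).2 hc)
        omega
    rw [Finset.sum_congr rfl hcong, htel, hMper]
    ring
  have hcard : (((Finset.range q).filter
      (fun p => ∀ t < q, (∑ u ∈ Finset.range (t + 1), g (u + p)) ≤ t)).card : ℤ)
      = (q:ℤ) - m := by
    rw [← hsum2, Finset.card_filter]
    push_cast
    rfl
  have hc2 : ((q - m : ℕ) : ℤ) = (q:ℤ) - m := by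
    rw [Nat.cast_sub hm.le]
  omega

/-- Simulate the parking process on the directed path `…→3→2→1`: cars arrive in
order with preferred spots given by the list; a car with preference `s` parks at
the largest unoccupied spot in `{1,…,s}`, returning `none` if some car fails. -/
def parkPath : Finset ℕ → List ℕ → Option (Finset ℕ)
  | occ, [] => some occ
  | occ, s :: rest =>
    let avail := (Finset.Icc 1 s).filter (fun k => k ∉ occ)
    if h : avail.Nonempty then parkPath (insert (avail.max' h) occ) rest
    else none

/-- `(s₁,…,s_m)` is a parking function iff every car succeeds in parking. -/
def IsParkingSeq (l : List ℕ) : Bool := (parkPath ∅ l).isSome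

lemma parkPath_isSome_iff (l : List ℕ) : ∀ (occ : Finset ℕ),
    (parkPath occ l).isSome = true ↔
      ∀ t, (occ ∩ Finset.Icc 1 t).card + l.countP (fun x => decide (x ≤ t)) ≤ t := by
  induction l with
  | nil =>
    intro occ
    simp only [parkPath, Option.isSome_some, List.countP_nil, Nat.add_zero, true_iff]
    intro t
    calc (occ ∩ Finset.Icc 1 t).card ≤ (Finset.Icc 1 t).card :=
          Finset.card_le_card Finset.inter_subset_right
      _ = t := by rw [Nat.card_Icc]; omega
  | cons s rest ih =>
    intro occ
    by_cases h : ((Finset.Icc 1 s).filter (fun k => k ∉ occ)).Nonempty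
    · rw [show parkPath occ (s :: rest)
          = parkPath (insert (((Finset.Icc 1 s).filter (fun k => k ∉ occ)).max' h) occ) rest
          from by simp [parkPath, h]]
      set p := ((Finset.Icc 1 s).filter (fun k => k ∉ occ)).max' h with hp
      have hpmem := Finset.max'_mem _ h
      rw [Finset.mem_filter, Finset.mem_Icc] at hpmem
      obtain ⟨⟨hp1, hps⟩, hpocc⟩ := hpmem
      have hmax : ∀ k, p < k → k ≤ s → k ∈ occ := by
        intro k hk1 hk2
        by_contra hk3
        have : k ≤ p := Finset.le_max' _ k (by
          rw [Finset.mem_filter, Finset.mem_Icc]; exact ⟨⟨by omega, hk2⟩, hk3⟩)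
        omega
      rw [ih]
      have hF : ∀ t, ((insert p occ) ∩ Finset.Icc 1 t).card
          = (occ ∩ Finset.Icc 1 t).card + (if p ≤ t then 1 else 0) := by
        intro t
        by_cases hpt : p ≤ t
        · rw [if_pos hpt]
          have : (insert p occ) ∩ Finset.Icc 1 t = insert p (occ ∩ Finset.Icc 1 t) := by
            rw [Finset.insert_inter_of_mem (Finset.mem_Icc.2 ⟨hp1, hpt⟩)]
          rw [this, Finset.card_insert_of_notMem (fun hc => hpocc (Finset.mem_inter.1 hc).1)]
        · rw [if_neg hpt]
          congr 1
          rw [Finset.insert_inter_of_notMem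
            (fun hc => hpt (Finset.mem_Icc.1 hc).2)]
      have hcnt : ∀ t, (s :: rest).countP (fun x => decide (x ≤ t))
          = rest.countP (fun x => decide (x ≤ t)) + (if s ≤ t then 1 else 0) := by
        intro t
        rw [List.countP_cons]
        simp
      constructor
      · -- new invariant → old invariant
        intro hnew t
        rw [hcnt]
        by_cases hst : s ≤ t
        · rw [if_pos hst]
          have := hnew t
          rw [hF] at this
          rw [if_pos (by omega : p ≤ t)] at this
          omega
        · rw [if_neg hst]
          have := hnew t
          rw [hF] at this
          by_cases hpt : p ≤ t
          · rw [if_pos hpt] at this; omega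
          · rw [if_neg hpt] at this; omega
      · -- old invariant → new invariant
        intro hold t
        rw [hF]
        by_cases hpt : p ≤ t
        · rw [if_pos hpt]
          by_cases hst : s ≤ t
          · have := hold t
            rw [hcnt, if_pos hst] at this
            omega
          · -- p ≤ t < s : use old invariant at s
            have hos := hold s
            rw [hcnt, if_pos (le_refl s)] at hos
            -- (occ ∩ Icc 1 s).card ≥ (occ ∩ Icc 1 t).card + (s - t)
            have hsub : (occ ∩ Finset.Icc 1 t) ∪ Finset.Ioc t s ⊆ occ ∩ Finset.Icc 1 s := by
              intro k hk
              rcases Finset.mem_union.1 hk with hk | hk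
              · rw [Finset.mem_inter, Finset.mem_Icc] at hk ⊢
                exact ⟨hk.1, hk.2.1, by omega⟩
              · rw [Finset.mem_Ioc] at hk
                rw [Finset.mem_inter, Finset.mem_Icc]
                exact ⟨hmax k (by omega) hk.2, by omega, hk.2⟩
            have hdisj : Disjoint (occ ∩ Finset.Icc 1 t) (Finset.Ioc t s) := by
              rw [Finset.disjoint_left]
              intro k hk1 hk2
              rw [Finset.mem_inter, Finset.mem_Icc] at hk1
              rw [Finset.mem_Ioc] at hk2
              omega
            have hcard1 : (occ ∩ Finset.Icc 1 t).card + (s - t)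
                ≤ (occ ∩ Finset.Icc 1 s).card := by
              have h1 := Finset.card_le_card hsub
              rw [Finset.card_union_of_disjoint hdisj, Nat.card_Ioc] at h1
              exact h1
            have hmono : rest.countP (fun x => decide (x ≤ t))
                ≤ rest.countP (fun x => decide (x ≤ s)) := by
              apply List.countP_mono_left
              intro x _ hx
              simp only [decide_eq_true_eq] at hx ⊢
              omega
            omega
        · rw [if_neg hpt]
          have := hold t
          rw [hcnt] at this
          omega
    · rw [show parkPath occ (s :: rest) = none from by simp [parkPath, h]]
      simp only [Option.isSome_none, Bool.false_eq_true, false_iff, not_forall]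
      push_neg
      refine ⟨s, ?_⟩
      have hfull : Finset.Icc 1 s ⊆ occ := by
        intro k hk
        by_contra hk2
        exact h ⟨k, Finset.mem_filter.2 ⟨hk, hk2⟩⟩
      have h1 : (occ ∩ Finset.Icc 1 s).card = s := by
        rw [Finset.inter_eq_right.2 hfull, Nat.card_Icc]
        omega
      have h2 : 1 ≤ (s :: rest).countP (fun x => decide (x ≤ s)) := by
        rw [List.countP_cons]
        simp
      omega
lemma countP_ofFn : ∀ {m : ℕ} (f : Fin m → ℕ) (pr : ℕ → Bool),
    (List.ofFn f).countP pr = (Finset.univ.filter (fun i => pr (f i) = true)).card := by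
  intro m
  induction m with
  | zero => intro f pr; simp
  | succ k ih =>
    intro f pr
    rw [List.ofFn_succ, List.countP_cons, ih (fun i => f i.succ) pr]
    rw [Finset.card_filter, Finset.card_filter, Fin.sum_univ_succ]
    simp only [Fin.succ]
    omega

lemma isParkingSeq_iff {m : ℕ} (f : Fin m → ℕ) :
    IsParkingSeq (List.ofFn f) = true ↔
      ∀ t, (Finset.univ.filter (fun i => f i ≤ t)).card ≤ t := by
  rw [IsParkingSeq, parkPath_isSome_iff]
  constructor
  · intro h t
    have := h t
    rw [Finset.empty_inter, Finset.card_empty, Nat.zero_add, countP_ofFn] at this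
    convert this using 2
    simp
  · intro h t
    rw [Finset.empty_inter, Finset.card_empty, Nat.zero_add, countP_ofFn]
    convert h t using 2
    simp

/-- For `1 ≤ m ≤ n`, the number of parking functions with `m` cars on the
directed path with `n` spots is `(n+1-m)(n+1)^{m-1}`. -/
theorem count_parking_functions_path (n m : ℕ) (hm : 1 ≤ m) (hmn : m ≤ n) :
    (Finset.univ.filter
        (fun s : Fin m → Fin n =>
          IsParkingSeq (List.ofFn (fun i => (s i : ℕ) + 1)))).card
      = (n + 1 - m) * (n + 1) ^ (m - 1) := by
  classical
  set q := n + 1 with hqdef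
  have hq : 0 < q := by omega
  have hmq : m < q := by omega
  haveI : NeZero q := ⟨by omega⟩
  set Good : (Fin m → ZMod q) → ZMod q → Prop :=
    fun b c => ∀ t < q, (Finset.univ.filter (fun i => (b i + c).val ≤ t)).card ≤ t with hGood
  have hvallt : ∀ x : ZMod q, x.val < q := fun x => ZMod.val_lt x
  have hvalinj : Function.Injective (ZMod.val (n := q)) := ZMod.val_injective q
  have hcastval : ∀ x : ZMod q, ((x.val : ℕ) : ZMod q) = x := fun x => by
    simp [ZMod.natCast_val, ZMod.cast_id]
  -- Step 1: for each b, the number of good shifts c is q - m.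
  have step1 : ∀ b : Fin m → ZMod q,
      (Finset.univ.filter (fun c => Good b c)).card = q - m := by
    intro b
    set g : ℕ → ℕ := fun x => (Finset.univ.filter (fun i => b i = (x : ZMod q))).card with hg
    have hcast : ∀ x : ℕ, ((x + q : ℕ) : ZMod q) = (x : ZMod q) := by
      intro x
      push_cast
      simp
    have hper : ∀ x, g (x + q) = g x := by
      intro x
      simp only [hg]
      rw [hcast x]
    have hsum : ∑ x ∈ Finset.range q, g x = m := by
      have h1 : (Finset.univ : Finset (Fin m)).card
          = ∑ x ∈ Finset.range q, (Finset.univ.filter (fun i => (b i).val = x)).card := by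
        apply Finset.card_eq_sum_card_fiberwise
        intro i _
        exact Finset.mem_range.2 (hvallt (b i))
      rw [Finset.card_univ, Fintype.card_fin] at h1
      rw [h1]
      apply Finset.sum_congr rfl
      intro x hx
      have hx' := Finset.mem_range.1 hx
      simp only [hg]
      apply congrArg
      apply Finset.filter_congr
      intro i _
      constructor
      · intro hbi
        rw [hbi, ZMod.val_cast_of_lt hx']
      · intro hv
        apply hvalinj
        rw [hv, ZMod.val_cast_of_lt hx']
    -- translate Good b c into the cycle-lemma condition at p = (-c).val
    have htrans : ∀ c : ZMod q, Good b c ↔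
        (∀ t < q, (∑ u ∈ Finset.range (t + 1), g (u + (-c).val)) ≤ t) := by
      intro c
      rw [hGood]
      apply forall_congr'
      intro t
      apply imp_congr_right
      intro ht
      have key : (Finset.univ.filter (fun i => (b i + c).val ≤ t)).card
          = ∑ u ∈ Finset.range (t + 1), g (u + (-c).val) := by
        have h1 : (Finset.univ.filter (fun i => (b i + c).val ≤ t)).card
            = ∑ u ∈ Finset.range (t + 1),
                ((Finset.univ.filter (fun i => (b i + c).val ≤ t)).filter
                  (fun i => (b i + c).val = u)).card := by
          apply Finset.card_eq_sum_card_fiberwise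
          intro i hi
          rw [Finset.mem_coe, Finset.mem_filter] at hi
          beta_reduce
          exact Finset.mem_range.2 (by omega)
        rw [h1]
        apply Finset.sum_congr rfl
        intro u hu
        have hu' : u < t + 1 := Finset.mem_range.1 hu
        rw [Finset.filter_filter]
        simp only [hg]
        apply congrArg
        apply Finset.filter_congr
        intro i _
        have h3 : ((u + (-c).val : ℕ) : ZMod q) = (u : ZMod q) - c := by
          push_cast
          rw [hcastval (-c)]
          ring
        constructor
        · rintro ⟨-, h2⟩
          rw [h3, eq_sub_iff_add_eq, ← hcastval (b i + c), h2]
        · intro h2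
          have h4 : (b i + c).val = u := by
            have h5 : b i + c = (u : ZMod q) := by
              rw [h2, h3]
              ring
            rw [h5, ZMod.val_cast_of_lt (by omega : u < q)]
          exact ⟨by omega, h4⟩
      rw [key]
    -- biject shifts c with starting points p in range q
    have hbij : (Finset.univ.filter (fun c => Good b c)).card
        = ((Finset.range q).filter
            (fun p => ∀ t < q, (∑ u ∈ Finset.range (t + 1), g (u + p)) ≤ t)).card := by
      apply Finset.card_nbij' (fun c => (-c).val) (fun p => -((p : ℕ) : ZMod q))
      · intro c hc
        rw [Finset.mem_coe, Finset.mem_filter] at hc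
        rw [Finset.mem_coe, Finset.mem_filter]
        exact ⟨Finset.mem_range.2 (hvallt _), (htrans c).1 hc.2⟩
      · intro p hp
        rw [Finset.mem_coe, Finset.mem_filter] at hp
        rw [Finset.mem_coe, Finset.mem_filter]
        refine ⟨Finset.mem_univ _, (htrans _).2 ?_⟩
        have he : (-(-((p : ℕ) : ZMod q))).val = p := by
          rw [neg_neg, ZMod.val_cast_of_lt (Finset.mem_range.1 hp.1)]
        rw [he]
        exact hp.2
      · intro c _
        beta_reduce
        rw [hcastval (-c), neg_neg]
      · intro p hp
        rw [Finset.mem_coe, Finset.mem_filter] at hp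
        beta_reduce
        rw [neg_neg, ZMod.val_cast_of_lt (Finset.mem_range.1 hp.1)]
    rw [hbij]
    exact cycle_count q m hmq g hper hsum
  -- Step 2: for each c, the number of good b equals the number of parking functions.
  have step2 : ∀ c : ZMod q,
      (Finset.univ.filter (fun b : Fin m → ZMod q => Good b c)).card
        = (Finset.univ.filter
            (fun s : Fin m → Fin n =>
              IsParkingSeq (List.ofFn (fun i => (s i : ℕ) + 1)))).card := by
    intro c
    symm
    apply Finset.card_nbij'
      (fun (s : Fin m → Fin n) => fun i => (((s i : ℕ) + 1 : ℕ) : ZMod q) - c)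
      (fun (b : Fin m → ZMod q) => fun i => (⟨(b i + c).val - 1, by
          have := hvallt (b i + c)
          omega⟩ : Fin n))
    · -- parking s maps to good b
      intro s hs
      rw [Finset.mem_coe, Finset.mem_filter] at hs
      have hchar := (isParkingSeq_iff (fun i => (s i : ℕ) + 1)).1 hs.2
      rw [Finset.mem_coe, Finset.mem_filter]
      refine ⟨Finset.mem_univ _, ?_⟩
      show Good _ c
      rw [hGood]
      intro t ht
      have hfe : (Finset.univ.filter
            (fun i => (((((s i : ℕ) + 1 : ℕ) : ZMod q) - c) + c).val ≤ t))
          = Finset.univ.filter (fun i => (s i : ℕ) + 1 ≤ t) := by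
        apply Finset.filter_congr
        intro i _
        have e : (((((s i : ℕ) + 1 : ℕ)) : ZMod q) - c) + c
            = (((s i : ℕ) + 1 : ℕ) : ZMod q) := by ring
        rw [e, ZMod.val_cast_of_lt (by have := (s i).isLt; omega)]
      rw [hfe]
      exact hchar t
    · -- good b maps to parking s
      intro b hb
      rw [Finset.mem_coe, Finset.mem_filter] at hb
      have hb2 := hb.2
      rw [hGood] at hb2
      have hpos : ∀ i : Fin m, 1 ≤ (b i + c).val := by
        intro i
        by_contra hcon
        have h0 := hb2 0 hq
        have hmem : i ∈ Finset.univ.filter (fun i => (b i + c).val ≤ 0) :=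
          Finset.mem_filter.2 ⟨Finset.mem_univ i, by omega⟩
        have := Finset.card_pos.2 ⟨i, hmem⟩
        omega
      rw [Finset.mem_coe, Finset.mem_filter]
      refine ⟨Finset.mem_univ _, ?_⟩
      rw [isParkingSeq_iff]
      intro t
      have hfe : Finset.univ.filter
            (fun i => (((⟨(b i + c).val - 1, by have := hvallt (b i + c); omega⟩ : Fin n) : ℕ)
              + 1 ≤ t))
          = Finset.univ.filter (fun i => (b i + c).val ≤ t) := by
        apply Finset.filter_congr
        intro i _
        have := hpos i
        constructor <;> intro h <;> simp only [] at h ⊢ <;> omega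
      rw [hfe]
      rcases Nat.lt_or_ge t q with h | h
      · exact hb2 t h
      · calc (Finset.univ.filter (fun i => (b i + c).val ≤ t)).card
            ≤ (Finset.univ : Finset (Fin m)).card :=
              Finset.card_le_card (Finset.filter_subset _ _)
          _ = m := by rw [Finset.card_univ, Fintype.card_fin]
          _ ≤ t := by omega
    · -- left inverse
      intro s _
      funext i
      apply Fin.ext
      have e : (((((s i : ℕ) + 1 : ℕ)) : ZMod q) - c) + c = (((s i : ℕ) + 1 : ℕ) : ZMod q) := by
        ring
      simp only [e, ZMod.val_cast_of_lt (show (s i : ℕ) + 1 < q by have := (s i).isLt; omega)]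
      omega
    · -- right inverse
      intro b hb
      rw [Finset.mem_coe, Finset.mem_filter] at hb
      have hb2 := hb.2
      rw [hGood] at hb2
      have hpos : ∀ i : Fin m, 1 ≤ (b i + c).val := by
        intro i
        by_contra hcon
        have h0 := hb2 0 hq
        have hmem : i ∈ Finset.univ.filter (fun i => (b i + c).val ≤ 0) :=
          Finset.mem_filter.2 ⟨Finset.mem_univ i, by omega⟩
        have := Finset.card_pos.2 ⟨i, hmem⟩
        omega
      funext i
      have h1 : ((b i + c).val - 1) + 1 = (b i + c).val := by
        have := hpos i
        omega
      simp only [h1]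
      rw [hcastval (b i + c)]
      ring
  -- Step 3: double counting
  have hdouble : ∑ b ∈ (Finset.univ : Finset (Fin m → ZMod q)),
        (Finset.univ.filter (fun c => Good b c)).card
      = ∑ c ∈ (Finset.univ : Finset (ZMod q)),
        (Finset.univ.filter (fun b : Fin m → ZMod q => Good b c)).card := by
    simp only [Finset.card_filter]
    rw [Finset.sum_comm]
  have hL : ∑ b ∈ (Finset.univ : Finset (Fin m → ZMod q)),
      (Finset.univ.filter (fun c => Good b c)).card = q ^ m * (q - m) := by
    rw [Finset.sum_congr rfl (fun b _ => step1 b), Finset.sum_const, Finset.card_univ]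
    rw [Fintype.card_fun, ZMod.card, Fintype.card_fin, smul_eq_mul]
  have hR : ∑ c ∈ (Finset.univ : Finset (ZMod q)),
      (Finset.univ.filter (fun b : Fin m → ZMod q => Good b c)).card
      = q * (Finset.univ.filter
          (fun s : Fin m → Fin n =>
            IsParkingSeq (List.ofFn (fun i => (s i : ℕ) + 1)))).card := by
    rw [Finset.sum_congr rfl (fun c _ => step2 c), Finset.sum_const, Finset.card_univ,
      ZMod.card, smul_eq_mul]
  have hmain : q * (Finset.univ.filter
      (fun s : Fin m → Fin n =>
        IsParkingSeq (List.ofFn (fun i => (s i : ℕ) + 1)))).card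
      = q ^ m * (q - m) := by
    rw [← hR, ← hdouble, hL]
  have hpow : q * q ^ (m - 1) = q ^ m := by
    rw [mul_comm, ← pow_succ, Nat.sub_add_cancel hm]
  have hfin : (Finset.univ.filter
      (fun s : Fin m → Fin n =>
        IsParkingSeq (List.ofFn (fun i => (s i : ℕ) + 1)))).card
      = (q - m) * q ^ (m - 1) := by
    apply Nat.eq_of_mul_eq_mul_left hq
    rw [hmain, ← hpow]
    ring
  rw [hfin]
end

section
/- If each of m = ⌊αn⌋ cars independently chooses a uniformly random preferred spot on the path of n spots, with 0 < α < 1, then the probability that the resulting sequence is a parking function, namely (n+1-m)(n+1)^{m-1}/n^m, converges to (1-α)e^α as n → ∞. -/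
open Filter Real

private lemma floor_div_tendsto (α : ℝ) (hα0 : 0 < α) :
    Tendsto (fun n : ℕ => (⌊α * n⌋₊ : ℝ) / n) atTop (nhds α) := by
  have hub : ∀ᶠ n : ℕ in atTop, (⌊α * n⌋₊ : ℝ) / n ≤ α := by
    filter_upwards [eventually_gt_atTop 0] with n hn
    have hn' : (0 : ℝ) < n := by exact_mod_cast hn
    rw [div_le_iff₀ hn']
    exact Nat.floor_le (by positivity)
  have hlb : ∀ᶠ n : ℕ in atTop, α - 1 / n ≤ (⌊α * n⌋₊ : ℝ) / n := by
    filter_upwards [eventually_gt_atTop 0] with n hn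
    have hn' : (0 : ℝ) < n := by exact_mod_cast hn
    rw [sub_le_iff_le_add, ← add_div, le_div_iff₀ hn']
    have := (Nat.sub_one_lt_floor (α * n)).le
    linarith
  have h1 : Tendsto (fun n : ℕ => α - 1 / (n : ℝ)) atTop (nhds α) := by
    have : Tendsto (fun n : ℕ => 1 / (n : ℝ)) atTop (nhds 0) :=
      tendsto_one_div_atTop_nhds_zero_nat
    simpa using (tendsto_const_nhds (x := α)).sub this
  exact tendsto_of_tendsto_of_tendsto_of_le_of_le' h1 tendsto_const_nhds hlb hub

/-- With `m = ⌊αn⌋` cars choosing uniform independent spots on the path with `n`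
spots, the probability of obtaining a parking function, namely
`(n+1-m)(n+1)^{m-1}/n^m`, converges to `(1-α)e^α` as `n → ∞`. -/
theorem parking_probability_path_limit (α : ℝ) (hα0 : 0 < α) (hα1 : α < 1) :
    Tendsto
      (fun n : ℕ =>
        ((n : ℝ) + 1 - (⌊α * n⌋₊ : ℕ)) * ((n : ℝ) + 1) ^ (⌊α * (n : ℝ)⌋₊ - 1)
          / (n : ℝ) ^ (⌊α * (n : ℝ)⌋₊))
      atTop (nhds ((1 - α) * Real.exp α)) := by
  set m : ℕ → ℕ := fun n => ⌊α * (n : ℝ)⌋₊ with hm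
  have hinv : Tendsto (fun n : ℕ => 1 / (n : ℝ)) atTop (nhds 0) :=
    tendsto_one_div_atTop_nhds_zero_nat
  have hfd := floor_div_tendsto α hα0
  -- eventually m n ≥ 1
  have hm1 : ∀ᶠ n : ℕ in atTop, 1 ≤ m n := by
    filter_upwards [eventually_ge_atTop ⌈1 / α⌉₊] with n hn
    have : (1 : ℝ) / α ≤ n := le_trans (Nat.le_ceil _) (by exact_mod_cast hn)
    have h1 : (1 : ℝ) ≤ α * n := by
      rw [div_le_iff₀ hα0] at this; linarith [this]
    exact Nat.le_floor (by exact_mod_cast h1)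
  -- first factor tends to 1 - α
  have hA : Tendsto (fun n : ℕ => ((n : ℝ) + 1 - m n) / n) atTop (nhds (1 - α)) := by
    have key : Tendsto (fun n : ℕ => 1 + 1 / (n : ℝ) - (m n : ℝ) / n) atTop
        (nhds (1 - α)) := by
      have := ((tendsto_const_nhds (x := (1:ℝ))).add hinv).sub hfd
      simpa using this
    refine key.congr' ?_
    filter_upwards [eventually_gt_atTop 0] with n hn
    have hn' : ((n : ℝ)) ≠ 0 := by positivity
    field_simp
  -- second factor
  have hN : Tendsto (fun n : ℕ => (n : ℝ)) atTop atTop := tendsto_natCast_atTop_atTop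
  have hlog : Tendsto (fun n : ℕ => (n : ℝ) * Real.log (1 + 1 / n)) atTop (nhds 1) :=
    (Real.tendsto_mul_log_one_add_div_atTop 1).comp hN
  have hmd : Tendsto (fun n : ℕ => ((m n - 1 : ℕ) : ℝ) / n) atTop (nhds α) := by
    have key : Tendsto (fun n : ℕ => (m n : ℝ) / n - 1 / n) atTop (nhds α) := by
      simpa using hfd.sub hinv
    refine key.congr' ?_
    filter_upwards [hm1, eventually_gt_atTop 0] with n h1 hn
    have : ((m n - 1 : ℕ) : ℝ) = (m n : ℝ) - 1 := by
      push_cast [h1]; ring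
    rw [this, sub_div]
  have hB : Tendsto (fun n : ℕ => ((m n - 1 : ℕ) : ℝ) * Real.log (((n : ℝ) + 1) / n))
      atTop (nhds α) := by
    have key := hmd.mul hlog
    rw [mul_one] at key
    refine key.congr' ?_
    filter_upwards [eventually_gt_atTop 0] with n hn
    have hn' : ((n : ℝ)) ≠ 0 := by positivity
    have : ((n : ℝ) + 1) / n = 1 + 1 / n := by field_simp
    rw [this]; field_simp
  have hAB := hA.mul (Real.continuous_exp.continuousAt.tendsto.comp hB)
  refine hAB.congr' ?_
  filter_upwards [hm1, eventually_gt_atTop 0] with n h1 hn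
  have hn' : (0 : ℝ) < (n : ℝ) := by exact_mod_cast hn
  have hpos : (0 : ℝ) < ((n : ℝ) + 1) / n := by positivity
  have hexp : Real.exp (((m n - 1 : ℕ) : ℝ) * Real.log (((n : ℝ) + 1) / n))
      = (((n : ℝ) + 1) / n) ^ (m n - 1) := by
    rw [Real.exp_nat_mul, Real.exp_log hpos]
  simp only [Function.comp, hexp]
  have hsucc : m n = (m n - 1) + 1 := (Nat.succ_pred_eq_of_pos h1).symm
  rw [div_pow, div_mul_div_comm, ← pow_succ', ← hsucc]
end

section
/- Let (ξ_k)_{k≥1} be i.i.d. integer-valued random variables with ξ_k ≤ 1 almost surely, E[ξ_1] > 0, and let C_n = ξ_1 + ... + ξ_n. Then P(C_n ≥ 0 for all n ≥ 1) = E[ξ_1] / P(ξ_1 = 1). -/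
open MeasureTheory ProbabilityTheory Filter Finset Topology

section Aux
variable {Ω : Type*} [MeasurableSpace Ω] (μ : Measure Ω) [IsProbabilityMeasure μ]
    (ξ : ℕ → Ω → ℤ)

/-- Law of any injectively-reindexed finite vector is the product measure. -/
lemma lawA (hmeas : ∀ i, Measurable (ξ i))
    (hindep : iIndepFun ξ μ)
    (hident : ∀ i, IdentDistrib (ξ i) (ξ 0) μ μ)
    {ι : Type*} [Fintype ι] (g : ι → ℕ) (hg : Function.Injective g) :
    Measure.map (fun ω (i : ι) => ξ (g i) ω) μ
      = Measure.pi (fun _ : ι => Measure.map (ξ 0) μ) := by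
  have hΦ : Measurable (fun ω (i : ι) => ξ (g i) ω) :=
    measurable_pi_lambda _ fun i => hmeas (g i)
  haveI : IsProbabilityMeasure (Measure.map (ξ 0) μ) :=
    Measure.isProbabilityMeasure_map (hmeas 0).aemeasurable
  refine (Measure.pi_eq fun s hs => ?_).symm
  rw [Measure.map_apply hΦ (MeasurableSet.univ_pi hs)]
  have hpre : (fun ω (i : ι) => ξ (g i) ω) ⁻¹' Set.pi Set.univ s
      = ⋂ j ∈ Finset.image g Finset.univ, ξ j ⁻¹' {z | ∀ i, g i = j → z ∈ s i} := by
    ext ω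
    simp only [Set.mem_preimage, Set.mem_pi, Set.mem_univ, forall_true_left, Set.mem_iInter,
      Finset.mem_image, Finset.mem_univ, true_and, Set.mem_setOf_eq]
    constructor
    · rintro h j ⟨i, rfl⟩ i' hi'
      exact hi' ▸ h i'
    · intro h i
      exact h (g i) ⟨i, rfl⟩ i rfl
  rw [hpre, hindep.measure_inter_preimage_eq_mul _ (fun j _ => MeasurableSet.of_discrete),
    Finset.prod_image (fun a _ b _ hab => hg hab)]
  refine Finset.prod_congr rfl fun i _ => ?_
  have hset : {z : ℤ | ∀ i', g i' = g i → z ∈ s i'} = s i := by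
    ext z
    exact ⟨fun h => h i rfl, fun hz i' hi' => (hg hi') ▸ hz⟩
  rw [hset, ← Measure.map_apply (hmeas (g i)) MeasurableSet.of_discrete,
    (hident (g i)).map_eq, Measure.map_apply (hmeas 0) MeasurableSet.of_discrete]

/-- Law of an injectively-reindexed sequence equals the law of the sequence. -/
lemma lawB (hmeas : ∀ i, Measurable (ξ i))
    (hindep : iIndepFun ξ μ)
    (hident : ∀ i, IdentDistrib (ξ i) (ξ 0) μ μ)
    (f : ℕ → ℕ) (hf : Function.Injective f) :
    Measure.map (fun ω (i : ℕ) => ξ (f i) ω) μ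
      = Measure.map (fun ω (i : ℕ) => ξ i ω) μ := by
  have hΦf : Measurable (fun ω (i : ℕ) => ξ (f i) ω) :=
    measurable_pi_lambda _ fun i => hmeas (f i)
  have hΦ : Measurable (fun ω (i : ℕ) => ξ i ω) :=
    measurable_pi_lambda _ fun i => hmeas i
  have : IsProbabilityMeasure (Measure.map (fun ω (i : ℕ) => ξ i ω) μ) :=
    Measure.isProbabilityMeasure_map hΦ.aemeasurable
  refine ext_of_generate_finite _ generateFrom_measurableCylinders.symm
    isPiSystem_measurableCylinders (fun t ht => ?_) ?_
  case refine_2 =>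
    haveI : IsProbabilityMeasure (Measure.map (fun ω (i : ℕ) => ξ (f i) ω) μ) :=
      Measure.isProbabilityMeasure_map hΦf.aemeasurable
    simp
  obtain ⟨s, S, hS, rfl⟩ := (mem_measurableCylinders t).1 ht
  have hcyl : MeasurableSet (cylinder s S) := MeasurableSet.cylinder (α := fun _ : ℕ => ℤ) s hS
  rw [Measure.map_apply hΦf hcyl, Measure.map_apply hΦ hcyl]
  have h1 : (fun ω (i : ℕ) => ξ (f i) ω) ⁻¹' cylinder s S
      = (fun ω (i : s) => ξ (f i) ω) ⁻¹' S := rfl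
  have h2 : (fun ω (i : ℕ) => ξ i ω) ⁻¹' cylinder s S
      = (fun ω (i : s) => ξ (i : ℕ) ω) ⁻¹' S := rfl
  rw [h1, h2,
    ← Measure.map_apply (measurable_pi_lambda _ fun i : s => hmeas (f i)) hS,
    ← Measure.map_apply (measurable_pi_lambda _ fun i : s => hmeas i) hS,
    lawA μ ξ hmeas hindep hident (fun i : s => f i) (hf.comp Subtype.val_injective),
    lawA μ ξ hmeas hindep hident (fun i : s => (i : ℕ)) Subtype.val_injective]

end Aux

/-- reversal of a partial-sum window -/
lemma sum_rev (x : ℕ → ℤ) (n m : ℕ) (hm : 1 ≤ m) (hmn : m ≤ n) :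
    ∑ i ∈ range m, x (n - 1 - i)
      = ∑ i ∈ range n, x i - ∑ i ∈ range (n - m), x i := by
  have h1 : range (n - m) ⊆ range n := Finset.range_subset_range.2 (by omega)
  rw [eq_sub_iff_add_eq, ← Finset.sum_sdiff h1]
  congr 1
  apply Finset.sum_nbij' (fun i => n - 1 - i) (fun k => n - 1 - k)
  · intro a ha
    simp only [Finset.mem_sdiff, Finset.mem_range] at *
    omega
  · intro a ha
    simp only [Finset.mem_sdiff, Finset.mem_range] at *
    omega
  · intro a ha
    simp only [Finset.mem_range] at ha
    omega
  · intro a ha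
    simp only [Finset.mem_sdiff, Finset.mem_range] at ha
    omega
  · intro a _
    rfl

/-- running max of a skip-free-right walk equals the number of ladder epochs -/
lemma ladder_count (x : ℕ → ℤ) (hx : ∀ i, x i ≤ 1) (N : ℕ) :
    (range (N + 1)).sup' nonempty_range_add_one (fun k => ∑ i ∈ range k, x i)
      = ∑ n ∈ range N,
          (if ∀ k < n + 1, (∑ i ∈ range k, x i) < ∑ i ∈ range (n + 1), x i
            then (1 : ℤ) else 0) := by
  induction N with
  | zero => simp
  | succ N ih =>
    set C : ℕ → ℤ := fun k => ∑ i ∈ range k, x i with hC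
    have hsup : (range (N + 1 + 1)).sup' nonempty_range_add_one C
        = C (N + 1) ⊔ (range (N + 1)).sup' nonempty_range_add_one C := by
      apply le_antisymm
      · apply Finset.sup'_le
        intro k hk
        rw [Finset.mem_range] at hk
        rcases Nat.lt_succ_iff_lt_or_eq.1 hk with h | h
        · exact le_sup_of_le_right (Finset.le_sup' C (Finset.mem_range.2 h))
        · subst h; exact le_sup_left
      · apply sup_le
        · exact Finset.le_sup' C (Finset.mem_range.2 (by omega))
        · apply Finset.sup'_le
          intro k hk
          rw [Finset.mem_range] at hk
          exact Finset.le_sup' C (Finset.mem_range.2 (by omega))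
    set M : ℤ := (range (N + 1)).sup' nonempty_range_add_one C with hM
    have hle : C N ≤ M := Finset.le_sup' C (by simp)
    have hstep : C (N + 1) = C N + x N := Finset.sum_range_succ x N
    rw [Finset.sum_range_succ, ← ih, hsup]
    by_cases hB : ∀ k < N + 1, C k < C (N + 1)
    · obtain ⟨k0, hk0, hk0eq⟩ :
          ∃ k0, k0 ∈ range (N + 1) ∧ M = C k0 :=
        Finset.exists_mem_eq_sup' nonempty_range_add_one C
      have h1 : M < C (N + 1) := hk0eq ▸ hB k0 (Finset.mem_range.1 hk0)
      have h2 : C (N + 1) ≤ M + 1 := by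
        have := hx N; omega
      rw [if_pos hB]
      omega
    · push_neg at hB
      obtain ⟨k, hk, hk2⟩ := hB
      have h3 : C (N + 1) ≤ M := le_trans hk2 (Finset.le_sup' C (by simpa using hk))
      rw [if_neg]
      · omega
      · push_neg
        exact ⟨k, hk, hk2⟩

/-- if `v n / n → L > 0` then the running sup also has `sup / n → L`. -/
lemma sup_div_tendsto (v : ℕ → ℝ) (L : ℝ) (hL : 0 < L)
    (hv : Tendsto (fun n => v n / n) atTop (𝓝 L)) :
    Tendsto (fun N => ((range (N + 1)).sup' nonempty_range_add_one v) / N) atTop (𝓝 L) := by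
  rw [tendsto_order]
  constructor
  · intro b hb
    filter_upwards [(tendsto_order.1 hv).1 b hb] with N hN
    exact hN.trans_le
      (div_le_div_of_nonneg_right (Finset.le_sup' v (Finset.mem_range.2 (Nat.lt_succ_self N)))
        (Nat.cast_nonneg N))
  · intro b hb
    obtain ⟨c, hc1, hc2⟩ := exists_between hb
    obtain ⟨K, hK⟩ := eventually_atTop.1 ((tendsto_order.1 hv).2 c hc1)
    set K' := max K 1 with hK'
    set D : ℝ := ((range (K' + 1)).sup' nonempty_range_add_one v) ⊔ 0 with hD
    have hDN : Tendsto (fun N : ℕ => D / N) atTop (𝓝 0) :=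
      tendsto_const_div_atTop_nhds_zero_nat D
    have hbc : (0:ℝ) < b - c := by linarith
    have hcpos : (0:ℝ) < c := lt_trans hL hc1
    filter_upwards [eventually_ge_atTop K', (tendsto_order.1 hDN).2 (b - c) hbc]
      with N hNK hND
    have hN1 : 1 ≤ N := le_trans (le_max_right K 1) hNK
    have hsub : ((range (N + 1)).sup' nonempty_range_add_one v) ≤ D + c * N := by
      apply Finset.sup'_le
      intro k hk
      rw [Finset.mem_range] at hk
      by_cases hkK : k ≤ K'
      · have h1 : v k ≤ D := le_trans
          (Finset.le_sup' v (Finset.mem_range.2 (by omega))) le_sup_left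
        have hcN : (0:ℝ) ≤ c * N := by positivity
        linarith
      · push_neg at hkK
        have hk1 : (1:ℝ) ≤ (k:ℝ) := by
          have : 1 ≤ k := by omega
          exact_mod_cast this
        have h2 : v k / k < c := hK k (by omega)
        have h3 : v k < c * k := by
          rw [div_lt_iff₀ (by linarith)] at h2
          linarith
        have h4 : c * (k:ℝ) ≤ c * N := by
          apply mul_le_mul_of_nonneg_left _ hcpos.le
          exact_mod_cast Nat.le_of_lt_succ hk
        have hD0 : (0:ℝ) ≤ D := le_sup_right
        linarith
    have hNpos : (0:ℝ) < N := by exact_mod_cast hN1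
    calc ((range (N + 1)).sup' nonempty_range_add_one v) / N
        ≤ (D + c * N) / N := div_le_div_of_nonneg_right hsub hNpos.le
      _ = D / N + c := by field_simp
      _ < b := by linarith

/-- For an i.i.d. integer-valued random walk which is skip-free to the right
(increments `≤ 1` a.s.) with positive mean increment, the probability that the
walk stays nonnegative forever is `E[ξ₁] / P(ξ₁ = 1)`. -/
theorem skip_free_walk_stays_nonneg
    {Ω : Type*} [MeasurableSpace Ω] (μ : Measure Ω) [IsProbabilityMeasure μ]
    (ξ : ℕ → Ω → ℤ) (hmeas : ∀ i, Measurable (ξ i))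
    (hindep : iIndepFun ξ μ)
    (hident : ∀ i, IdentDistrib (ξ i) (ξ 0) μ μ)
    (hbound : ∀ i, ∀ᵐ ω ∂μ, ξ i ω ≤ 1)
    (hint : Integrable (fun ω => ((ξ 0 ω : ℝ))) μ)
    (hpos : 0 < ∫ ω, (ξ 0 ω : ℝ) ∂μ) :
    μ {ω | ∀ n, 1 ≤ n → 0 ≤ ∑ k ∈ Finset.range n, ξ k ω}
      = ENNReal.ofReal ((∫ ω, (ξ 0 ω : ℝ) ∂μ) / (μ {ω | ξ 0 ω = 1}).toReal) := by
  classical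
  set Eξ : ℝ := ∫ ω, (ξ 0 ω : ℝ) ∂μ with hEξ
  set C : ℕ → Ω → ℤ := fun n ω => ∑ k ∈ Finset.range n, ξ k ω with hCdef
  have hCmeas : ∀ n, Measurable (C n) :=
    fun n => Finset.measurable_sum _ fun i _ => hmeas i
  set Φ : Ω → ℕ → ℤ := fun ω i => ξ i ω with hΦdef
  have hΦ : Measurable Φ := measurable_pi_lambda _ fun i => hmeas i
  set Sgt : ℕ → Set (ℕ → ℤ) :=
    fun n => {x | ∀ m, 1 ≤ m → m ≤ n → 0 < ∑ i ∈ Finset.range m, x i} with hSgtdef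
  set Sge : Set (ℕ → ℤ) :=
    {x | ∀ m, 1 ≤ m → 0 ≤ ∑ i ∈ Finset.range m, x i} with hSgedef
  have hsummeas : ∀ m : ℕ, Measurable (fun x : ℕ → ℤ => ∑ i ∈ Finset.range m, x i) :=
    fun m => Finset.measurable_sum _ fun i _ => measurable_pi_apply i
  have hSgtm : ∀ n, MeasurableSet (Sgt n) := by
    intro n
    have : Sgt n = ⋂ (m : ℕ), ⋂ (_ : 1 ≤ m) (_ : m ≤ n),
        (fun x : ℕ → ℤ => ∑ i ∈ Finset.range m, x i) ⁻¹' {z | 0 < z} := by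
      ext x; simp [hSgtdef]
    rw [this]
    exact MeasurableSet.iInter fun m => MeasurableSet.iInter fun _ =>
      MeasurableSet.iInter fun _ => (hsummeas m) .of_discrete
  have hSgem : MeasurableSet Sge := by
    have : Sge = ⋂ (m : ℕ), ⋂ (_ : 1 ≤ m),
        (fun x : ℕ → ℤ => ∑ i ∈ Finset.range m, x i) ⁻¹' {z | 0 ≤ z} := by
      ext x; simp [hSgedef]
    rw [this]
    exact MeasurableSet.iInter fun m => MeasurableSet.iInter fun _ =>
      (hsummeas m) .of_discrete
  -- ladder events
  set B : ℕ → Set Ω := fun n => {ω | ∀ k < n, C k ω < C n ω} with hBdef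
  have hBmeas : ∀ n, MeasurableSet (B n) := by
    intro n
    have : B n = ⋂ (k : ℕ), ⋂ (_ : k < n),
        (fun ω => C n ω - C k ω) ⁻¹' {z | 0 < z} := by
      ext ω; simp [hBdef, sub_pos]
    rw [this]
    exact MeasurableSet.iInter fun k => MeasurableSet.iInter fun _ =>
      ((hCmeas n).sub (hCmeas k)) .of_discrete
  -- duality
  have hdual : ∀ n : ℕ, μ (B n) = μ (Φ ⁻¹' Sgt n) := by
    intro n
    set f : ℕ → ℕ := fun i => if i < n then n - 1 - i else i with hfdef
    have hf : Function.Injective f := by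
      intro a b hab
      simp only [hfdef] at hab
      split_ifs at hab <;> omega
    have hΦf : Measurable (fun ω (i : ℕ) => ξ (f i) ω) :=
      measurable_pi_lambda _ fun i => hmeas (f i)
    have h1 : (fun ω (i : ℕ) => ξ (f i) ω) ⁻¹' Sgt n = B n := by
      ext ω
      simp only [Set.mem_preimage, hSgtdef, Set.mem_setOf_eq, hBdef]
      constructor
      · intro h k hk
        have h2 := h (n - k) (by omega) (by omega)
        have h3 : ∑ i ∈ Finset.range (n - k), ξ (f i) ω
            = ∑ i ∈ Finset.range (n - k), (fun j => ξ j ω) (n - 1 - i) := by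
          apply Finset.sum_congr rfl
          intro i hi
          rw [Finset.mem_range] at hi
          simp only [hfdef, if_pos (by omega : i < n)]
        rw [h3, sum_rev (fun j => ξ j ω) n (n - k) (by omega) (by omega)] at h2
        have h4 : n - (n - k) = k := by omega
        rw [h4] at h2
        simpa [hCdef, sub_pos] using h2
      · intro h m hm1 hmn
        have h3 : ∑ i ∈ Finset.range m, ξ (f i) ω
            = ∑ i ∈ Finset.range m, (fun j => ξ j ω) (n - 1 - i) := by
          apply Finset.sum_congr rfl
          intro i hi
          rw [Finset.mem_range] at hi
          simp only [hfdef, if_pos (by omega : i < n)]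
        rw [h3, sum_rev (fun j => ξ j ω) n m hm1 hmn]
        have h2 := h (n - m) (by omega)
        simp only [hCdef] at h2
        omega
    calc μ (B n) = Measure.map (fun ω (i : ℕ) => ξ (f i) ω) μ (Sgt n) := by
          rw [Measure.map_apply hΦf (hSgtm n), h1]
      _ = Measure.map Φ μ (Sgt n) := by
          rw [lawB μ ξ hmeas hindep hident f hf]
      _ = μ (Φ ⁻¹' Sgt n) := Measure.map_apply hΦ (hSgtm n)
  -- good event
  have hEgood : ∀ᵐ ω ∂μ, ∀ i, ξ i ω ≤ 1 := ae_all_iff.2 hbound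
  set MR : ℕ → Ω → ℝ := fun N ω =>
    (((Finset.range (N + 1)).sup' nonempty_range_add_one (fun k => C k ω) : ℤ) : ℝ) with hMRdef
  have hq : ∀ N : ℕ, ∫ ω, MR N ω ∂μ
      = ∑ i ∈ Finset.range N, (μ (Φ ⁻¹' Sgt (i + 1))).toReal := by
    intro N
    have hind : ∀ i : ℕ,
        Integrable (fun ω => Set.indicator (B (i + 1)) (fun _ => (1:ℝ)) ω) μ :=
      fun i => (integrable_const (1:ℝ)).indicator (hBmeas (i + 1))
    have hae : (fun ω => MR N ω)
        =ᵐ[μ] fun ω => ∑ i ∈ Finset.range N,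
          Set.indicator (B (i + 1)) (fun _ => (1:ℝ)) ω := by
      filter_upwards [hEgood] with ω hg
      have hlc := ladder_count (fun i => ξ i ω) hg N
      have hcast : MR N ω
          = ((∑ n ∈ Finset.range N,
              (if ∀ k < n + 1, (∑ i ∈ Finset.range k, ξ i ω)
                  < ∑ i ∈ Finset.range (n + 1), ξ i ω then (1:ℤ) else 0) : ℤ) : ℝ) := by
        simp only [hMRdef]
        exact_mod_cast congrArg (fun z : ℤ => (z : ℝ)) hlc
      rw [hcast]
      push_cast
      apply Finset.sum_congr rfl
      intro i _
      simp only [Set.indicator_apply, hBdef, Set.mem_setOf_eq, hCdef]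
    rw [integral_congr_ae hae, integral_finset_sum _ (fun i _ => hind i)]
    apply Finset.sum_congr rfl
    intro i _
    rw [integral_indicator_const (1:ℝ) (hBmeas (i + 1)), smul_eq_mul, mul_one, measureReal_def, hdual (i + 1)]
  -- strong law of large numbers
  have hslln : ∀ᵐ ω ∂μ, Tendsto (fun n => ((C n ω : ℤ) : ℝ) / n) atTop (𝓝 Eξ) := by
    have h := strong_law_ae_real (fun i ω => ((ξ i ω : ℤ) : ℝ)) hint
      (fun i j hij => (hindep.indepFun hij).comp
        (Measurable.of_discrete (f := fun z : ℤ => (z : ℝ)))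
        (Measurable.of_discrete (f := fun z : ℤ => (z : ℝ))))
      (fun i => (hident i).comp (Measurable.of_discrete (f := fun z : ℤ => (z : ℝ))))
    filter_upwards [h] with ω hω
    have heq : (fun n : ℕ => ((C n ω : ℤ) : ℝ) / n)
        = fun n : ℕ => (∑ i ∈ Finset.range n, ((ξ i ω : ℤ) : ℝ)) / n := by
      funext n
      simp only [hCdef]
      push_cast
      rfl
    rw [heq]
    exact hω
  have hmaxconv : ∀ᵐ ω ∂μ, Tendsto (fun N => MR N ω / N) atTop (𝓝 Eξ) := by
    filter_upwards [hslln] with ω hω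
    have h := sup_div_tendsto (fun k => ((C k ω : ℤ) : ℝ)) Eξ hpos hω
    have heq : (fun N => MR N ω / N)
        = fun N => ((Finset.range (N + 1)).sup' nonempty_range_add_one
            (fun k => ((C k ω : ℤ) : ℝ))) / N := by
      funext N
      simp only [hMRdef]
      rw [Finset.comp_sup'_eq_sup'_comp nonempty_range_add_one (fun z : ℤ => (z : ℝ))
        (fun x y => by
          show ((x ⊔ y : ℤ) : ℝ) = ((x : ℤ) : ℝ) ⊔ ((y : ℤ) : ℝ)
          rw [Int.cast_max])]
      rfl
    rw [heq]
    exact h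
  -- dominated convergence
  have hMRmeas : ∀ N : ℕ, Measurable (MR N) := by
    intro N
    have heq : (fun ω => (Finset.range (N + 1)).sup' nonempty_range_add_one (fun k => C k ω))
        = (Finset.range (N + 1)).sup' nonempty_range_add_one C := by
      funext ω
      rw [Finset.sup'_apply]
    exact (Measurable.of_discrete (f := fun z : ℤ => (z : ℝ))).comp
      (heq ▸ Finset.measurable_sup' nonempty_range_add_one fun k _ => hCmeas k)
  have hdom : Tendsto (fun N => ∫ ω, MR N ω / N ∂μ) atTop (𝓝 Eξ) := by
    have hEint : ∫ ω, (fun _ : Ω => Eξ) ω ∂μ = Eξ := by simp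
    have h := tendsto_integral_of_dominated_convergence (fun _ : Ω => (1:ℝ))
      (fun N => ((hMRmeas N).div_const _).aestronglyMeasurable)
      (integrable_const (1:ℝ))
      (fun N => by
        filter_upwards [hEgood] with ω hg
        have h0 : (0:ℝ) ≤ MR N ω := by
          simp only [hMRdef]
          have : (0:ℤ) ≤ (Finset.range (N + 1)).sup' nonempty_range_add_one (fun k => C k ω) := by
            have := Finset.le_sup' (fun k => C k ω) (Finset.mem_range.2 (by omega : 0 < N + 1))
            exact le_trans (by simp [hCdef]) this
          exact_mod_cast this
        have hub : MR N ω ≤ N := by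
          simp only [hMRdef]
          have : (Finset.range (N + 1)).sup' nonempty_range_add_one (fun k => C k ω) ≤ N := by
            apply Finset.sup'_le
            intro k hk
            rw [Finset.mem_range] at hk
            calc C k ω ≤ ∑ _i ∈ Finset.range k, (1:ℤ) :=
                  Finset.sum_le_sum fun i _ => hg i
              _ = k := by simp
              _ ≤ N := by exact_mod_cast Nat.lt_succ_iff.1 hk
          exact_mod_cast this
        rw [Real.norm_eq_abs, abs_div, abs_of_nonneg h0, Nat.abs_cast]
        rcases Nat.eq_zero_or_pos N with h | h
        · subst h; simp
        · rw [div_le_one (by exact_mod_cast h)]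
          exact hub)
      hmaxconv
    rw [hEint] at h
    exact h
  -- continuity from above
  have hanti : Antitone fun n : ℕ => Φ ⁻¹' Sgt (n + 1) := by
    intro a b hab
    apply Set.preimage_mono
    intro x hx
    exact fun m hm1 hm2 => hx m hm1 (by omega)
  have hiInter : (⋂ n : ℕ, Φ ⁻¹' Sgt (n + 1))
      = {ω | ∀ m, 1 ≤ m → 0 < C m ω} := by
    ext ω
    simp only [Set.mem_iInter, Set.mem_preimage, hSgtdef, Set.mem_setOf_eq, hCdef]
    exact ⟨fun h m hm => h m m hm (by omega), fun h n m hm1 _ => h m hm1⟩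
  have htendsA : Tendsto (fun n : ℕ => (μ (Φ ⁻¹' Sgt (n + 1))).toReal) atTop
      (𝓝 ((μ {ω | ∀ m, 1 ≤ m → 0 < C m ω}).toReal)) := by
    have h := tendsto_measure_iInter_atTop
      (fun n => (hΦ (hSgtm (n + 1))).nullMeasurableSet) hanti ⟨0, measure_ne_top μ _⟩
    rw [hiInter] at h
    exact (ENNReal.tendsto_toReal (measure_ne_top μ _)).comp h
  -- combine: the probability of staying strictly positive is Eξ
  have hkey : (μ {ω | ∀ m, 1 ≤ m → 0 < C m ω}).toReal = Eξ := by
    have hc := htendsA.cesaro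
    have h2 : ∀ N : ℕ, (N : ℝ)⁻¹ * (∑ i ∈ Finset.range N, (μ (Φ ⁻¹' Sgt (i + 1))).toReal)
        = ∫ ω, MR N ω / N ∂μ := by
      intro N
      rw [inv_mul_eq_div, ← hq N, ← integral_div]
    simp only [h2] at hc
    exact tendsto_nhds_unique hc hdom
  -- split off the first step using independence
  set W : Set Ω := (fun ω (i : ℕ) => ξ (i + 1) ω) ⁻¹' Sge with hWdef
  have hΨ : Measurable (fun ω (i : ℕ) => ξ (i + 1) ω) :=
    measurable_pi_lambda _ fun i => hmeas (i + 1)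
  have hWT : μ W = μ (Φ ⁻¹' Sge) := by
    have hf : Function.Injective (fun i : ℕ => i + 1) := fun a b h => by simpa using h
    calc μ W = Measure.map (fun ω (i : ℕ) => ξ (i + 1) ω) μ Sge :=
          (Measure.map_apply hΨ hSgem).symm
      _ = Measure.map Φ μ Sge := by rw [lawB μ ξ hmeas hindep hident _ hf]
      _ = μ (Φ ⁻¹' Sge) := Measure.map_apply hΦ hSgem
  have haeeq : μ {ω | ∀ m, 1 ≤ m → 0 < C m ω} = μ ({ω | ξ 0 ω = 1} ∩ W) := by
    have hsetae : {ω | ∀ m, 1 ≤ m → 0 < C m ω} =ᵐ[μ] (({ω | ξ 0 ω = 1} ∩ W : Set Ω)) := by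
      rw [Filter.eventuallyEq_set]
      filter_upwards [hbound 0] with ω h0
      simp only [Set.mem_setOf_eq, Set.mem_inter_iff, hWdef, Set.mem_preimage, hSgedef,
        hCdef]
      constructor
      · intro h
        have h1 : ξ 0 ω = 1 := by
          have := h 1 le_rfl
          rw [Finset.sum_range_one] at this
          omega
        refine ⟨h1, fun m hm => ?_⟩
        have h2 := h (m + 1) (by omega)
        have h3 : (∑ i ∈ Finset.range (m + 1), ξ i ω)
            = (∑ i ∈ Finset.range m, ξ (i + 1) ω) + ξ 0 ω :=
          Finset.sum_range_succ' (fun k => ξ k ω) m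
        rw [h3] at h2
        show 0 ≤ ∑ i ∈ Finset.range m, ξ (i + 1) ω
        omega
      · rintro ⟨h1, h2⟩ m hm
        have h2' : ∀ m, 1 ≤ m → 0 ≤ ∑ i ∈ Finset.range m, ξ (i + 1) ω := h2
        obtain ⟨k, rfl⟩ : ∃ k, m = k + 1 := ⟨m - 1, by omega⟩
        have h3 : (∑ i ∈ Finset.range (k + 1), ξ i ω)
            = (∑ i ∈ Finset.range k, ξ (i + 1) ω) + ξ 0 ω :=
          Finset.sum_range_succ' (fun j => ξ j ω) k
        rw [h3]
        rcases Nat.eq_zero_or_pos k with hk | hk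
        · subst hk
          simp only [Finset.range_zero, Finset.sum_empty, zero_add]
          omega
        · have := h2' k (by omega)
          omega
    exact measure_congr hsetae
  have hsplit : μ ({ω | ξ 0 ω = 1} ∩ W) = μ {ω | ξ 0 ω = 1} * μ W := by
    have hIndep := indep_iSup_of_disjoint
      (fun i => (hmeas i).comap_le) hindep
      (disjoint_compl_right : Disjoint ({0} : Set ℕ) ({0}ᶜ))
    have h1 : MeasurableSet[⨆ i ∈ ({0} : Set ℕ), MeasurableSpace.comap (ξ i) inferInstance]
        {ω | ξ 0 ω = 1} := by
      have hle : MeasurableSpace.comap (ξ 0) inferInstance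
          ≤ ⨆ i ∈ ({0} : Set ℕ), MeasurableSpace.comap (ξ i) inferInstance :=
        le_iSup₂ (f := fun (i : ℕ) (_ : i ∈ ({0} : Set ℕ)) =>
          MeasurableSpace.comap (ξ i) inferInstance) 0 rfl
      exact hle _ ⟨{1}, MeasurableSet.of_discrete, by ext ω; simp⟩
    have h2 : MeasurableSet[⨆ i ∈ ({0}ᶜ : Set ℕ),
        MeasurableSpace.comap (ξ i) inferInstance] W := by
      have hΨ' : Measurable[⨆ i ∈ ({0}ᶜ : Set ℕ), MeasurableSpace.comap (ξ i) inferInstance]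
          (fun ω (i : ℕ) => ξ (i + 1) ω) := by
        apply @measurable_pi_lambda Ω ℕ (fun _ => ℤ)
          (⨆ i ∈ ({0}ᶜ : Set ℕ), MeasurableSpace.comap (ξ i) inferInstance) _
        intro i
        exact Measurable.mono (Measurable.of_comap_le le_rfl)
          (le_iSup₂ (f := fun (j : ℕ) (_ : j ∈ ({0}ᶜ : Set ℕ)) =>
            MeasurableSpace.comap (ξ j) inferInstance) (i + 1) (by simp)) le_rfl
      exact hΨ' hSgem
    exact (Indep_iff _ _ _).1 hIndep _ _ h1 h2
  have hTgt : {ω | ∀ n, 1 ≤ n → 0 ≤ ∑ k ∈ Finset.range n, ξ k ω} = Φ ⁻¹' Sge := by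
    ext ω
    simp [hSgedef, hΦdef]
  set c := μ {ω | ξ 0 ω = 1} with hcdef
  set ρ := μ (Φ ⁻¹' Sge) with hρdef
  have hAgt : μ {ω | ∀ m, 1 ≤ m → 0 < C m ω} = c * ρ := by
    rw [haeeq, hsplit, hWT]
  have hcne : c ≠ ⊤ := measure_ne_top μ _
  have hρne : ρ ≠ ⊤ := measure_ne_top μ _
  have hEq : Eξ = c.toReal * ρ.toReal := by
    rw [← hkey, hAgt, ENNReal.toReal_mul]
  have hc0 : c ≠ 0 := by
    intro h0
    rw [h0] at hEq
    simp only [ENNReal.toReal_zero, zero_mul] at hEq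
    exact absurd hEq (by linarith)
  have hcpos : 0 < c.toReal := ENNReal.toReal_pos hc0 hcne
  rw [hTgt]
  have hdivEq : Eξ / c.toReal = ρ.toReal := by
    rw [hEq]
    field_simp
  rw [hdivEq, ENNReal.ofReal_toReal hρne]
end

section
/- Let X be a nonnegative integer-valued random variable with E[X] < ∞ satisfying the distributional equation X =_d P + Σ_{i=1}^N (X_i − 1)^+, where P ~ Po(α), N ~ Po(1), the X_i are i.i.d. copies of X, and all variables on the right are independent. Then P(X ≥ 1) = α. -/
open MeasureTheory ProbabilityTheory
open scoped NNReal ENNReal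

section AuxLemmas

lemma poissonPMF_apply' (r : ℝ≥0) (n : ℕ) :
    poissonPMF r n = ENNReal.ofReal (poissonPMFReal r n) := rfl

lemma poisson_step' (r : ℝ≥0) (n : ℕ) :
    ((n + 1 : ℕ) : ℝ≥0∞) * poissonPMF r (n + 1) = (r : ℝ≥0∞) * poissonPMF r n := by
  rw [poissonPMF_apply', poissonPMF_apply', ← ENNReal.ofReal_natCast,
    ← ENNReal.ofReal_coe_nnreal, ← ENNReal.ofReal_mul (by positivity),
    ← ENNReal.ofReal_mul (by positivity)]
  congr 1
  unfold poissonPMFReal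
  rw [Nat.factorial_succ]
  have h1 : (n.factorial : ℝ) ≠ 0 := by positivity
  push_cast
  field_simp
  ring

set_option maxHeartbeats 1000000 in
lemma poisson_mean' (r : ℝ≥0) :
    ∫⁻ n, (n : ℝ≥0∞) ∂(poissonMeasure r) = (r : ℝ≥0∞) := by
  rw [lintegral_countable']
  have h : ∀ n : ℕ, (n : ℝ≥0∞) * ((poissonMeasure r) {n})
      = (n : ℝ≥0∞) * poissonPMF r n := fun n => by
    rw [poissonMeasure_singleton, poissonPMF_apply']; rfl
  rw [tsum_congr h, tsum_eq_zero_add' ENNReal.summable]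
  simp only [Nat.cast_zero, zero_mul, zero_add]
  rw [tsum_congr (fun n => by exact_mod_cast poisson_step' r n),
    ENNReal.tsum_mul_left, PMF.tsum_coe, mul_one]

variable {Ω : Type*} [MeasurableSpace Ω] {μ : Measure Ω}

lemma lint_ite_one' {N : Ω → ℕ} (hNm : Measurable N) (i : ℕ) :
    ∫⁻ ω, (if i < N ω then (1 : ℝ≥0∞) else 0) ∂μ = μ {ω | i < N ω} := by
  have h : (fun ω => if i < N ω then (1 : ℝ≥0∞) else 0)
      = Set.indicator {ω | i < N ω} (1 : Ω → ℝ≥0∞) := by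
    ext ω; simp [Set.indicator_apply]
  rw [h, lintegral_indicator_one (show MeasurableSet {ω | i < N ω} from hNm trivial)]

lemma tsum_ite_lt' (n : ℕ) :
    ∑' i : ℕ, (if i < n then (1 : ℝ≥0∞) else 0) = (n : ℝ≥0∞) := by
  rw [tsum_eq_sum (s := Finset.range n) (fun i hi => by
    simp only [Finset.mem_range, not_lt] at hi
    simp [Nat.not_lt.mpr hi])]
  rw [Finset.sum_ite_of_true (fun i hi => Finset.mem_range.mp hi)]
  simp

end AuxLemmas

/-- If a nonnegative integer random variable `X` with finite mean satisfies the
recursive distributional equation `X =_d P + Σ_{i=1}^N (X_i - 1)⁺` with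
`P ~ Po(α)`, `N ~ Po(1)`, `X_i` i.i.d. copies of `X`, all independent, then
`P(X ≥ 1) = α`. -/
theorem rde_prob_ge_one
    {Ω : Type*} [MeasurableSpace Ω] (μ : Measure Ω) [IsProbabilityMeasure μ]
    (α : ℝ≥0) (hα : 0 < α)
    (X P N : Ω → ℕ) (ξ : ℕ → Ω → ℕ)
    (hXm : Measurable X) (hPm : Measurable P) (hNm : Measurable N)
    (hξm : ∀ i, Measurable (ξ i))
    (hP : μ.map P = poissonMeasure α)
    (hN : μ.map N = poissonMeasure 1)
    (hξ : ∀ i, μ.map (ξ i) = μ.map X)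
    (hindep : iIndepFun
      (fun i : ℕ => (match i with
        | 0 => P
        | 1 => N
        | (j + 2) => ξ j : Ω → ℕ)) μ)
    (hRDE : μ.map (fun ω => P ω + ∑ i ∈ Finset.range (N ω), (ξ i ω - 1)) = μ.map X)
    (hint : Integrable (fun ω => (X ω : ℝ)) μ) :
    μ {ω | 1 ≤ X ω} = ENNReal.ofReal (α : ℝ) := by
  classical
  have hcast : Measurable (fun n : ℕ => (n : ℝ≥0∞)) := measurable_from_top
  set g : Ω → ℕ := fun ω => ∑ i ∈ Finset.range (N ω), (ξ i ω - 1) with hg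
  -- measurability of g
  have hgm : Measurable g := by
    apply measurable_to_countable'
    intro k
    have hset : g ⁻¹' {k} =
        ⋃ n, ({ω | N ω = n} ∩ {ω | ∑ i ∈ Finset.range n, (ξ i ω - 1) = k}) := by
      ext ω
      simp only [Set.mem_preimage, Set.mem_singleton_iff, Set.mem_iUnion, Set.mem_inter_iff,
        Set.mem_setOf_eq, hg]
      constructor
      · intro h; exact ⟨N ω, rfl, h⟩
      · rintro ⟨n, hn, hs⟩; rw [hn]; exact hs
    rw [hset]
    refine MeasurableSet.iUnion fun n => (hNm (MeasurableSet.singleton n)).inter ?_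
    have hsum : Measurable fun ω => ∑ i ∈ Finset.range n, (ξ i ω - 1) := by
      apply Finset.measurable_sum
      intro i _
      exact (measurable_from_top (f := fun m : ℕ => m - 1)).comp (hξm i)
    exact hsum (measurableSet_singleton k)
  -- abbreviations
  set c : ℝ≥0∞ := ∫⁻ ω, ((X ω - 1 : ℕ) : ℝ≥0∞) ∂μ with hc
  set m : ℝ≥0∞ := ∫⁻ ω, (X ω : ℝ≥0∞) ∂μ with hm
  set p : ℝ≥0∞ := μ {ω | 1 ≤ X ω} with hp
  -- mean of P is α
  have hmeanP : ∫⁻ ω, (P ω : ℝ≥0∞) ∂μ = (α : ℝ≥0∞) := by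
    rw [← lintegral_map hcast hPm, hP, poisson_mean']
  -- mean of N is 1
  have hmeanN : ∫⁻ ω, (N ω : ℝ≥0∞) ∂μ = 1 := by
    rw [← lintegral_map hcast hNm, hN, poisson_mean']
    simp
  -- each ξ i has the same truncated mean as X
  have hmeanξ : ∀ i, ∫⁻ ω, ((ξ i ω - 1 : ℕ) : ℝ≥0∞) ∂μ = c := by
    intro i
    have h1 : Measurable (fun n : ℕ => ((n - 1 : ℕ) : ℝ≥0∞)) := measurable_from_top
    rw [hc, ← lintegral_map h1 (hξm i), hξ i, lintegral_map h1 hXm]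
  -- the summands
  have hFm : ∀ i : ℕ, Measurable (fun ω => (if i < N ω then (1:ℝ≥0∞) else 0)
      * ((ξ i ω - 1 : ℕ) : ℝ≥0∞)) := by
    intro i
    exact ((measurable_from_top (f := fun n : ℕ => if i < n then (1:ℝ≥0∞) else 0)).comp hNm).mul
      ((measurable_from_top (f := fun n : ℕ => ((n - 1 : ℕ) : ℝ≥0∞))).comp (hξm i))
  -- independence of N and ξ i
  have hindNξ : ∀ i : ℕ, IndepFun N (ξ i) μ := by
    intro i
    exact hindep.indepFun (i := 1) (j := i + 2) (by omega)
  -- mean of g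
  have hmeang : ∫⁻ ω, (g ω : ℝ≥0∞) ∂μ = c := by
    have hterm : ∀ ω, (g ω : ℝ≥0∞) = ∑' i : ℕ, (if i < N ω then (1:ℝ≥0∞) else 0)
        * ((ξ i ω - 1 : ℕ) : ℝ≥0∞) := by
      intro ω
      rw [hg]
      push_cast
      rw [tsum_eq_sum (s := Finset.range (N ω)) (fun i hi => by
        simp only [Finset.mem_range, not_lt] at hi
        simp [Nat.not_lt.mpr hi])]
      refine Finset.sum_congr rfl fun i hi => ?_
      rw [if_pos (Finset.mem_range.mp hi), one_mul]
    calc ∫⁻ ω, (g ω : ℝ≥0∞) ∂μ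
        = ∫⁻ ω, ∑' i : ℕ, (if i < N ω then (1:ℝ≥0∞) else 0)
            * ((ξ i ω - 1 : ℕ) : ℝ≥0∞) ∂μ := lintegral_congr hterm
      _ = ∑' i : ℕ, ∫⁻ ω, (if i < N ω then (1:ℝ≥0∞) else 0)
            * ((ξ i ω - 1 : ℕ) : ℝ≥0∞) ∂μ := lintegral_tsum fun i => (hFm i).aemeasurable
      _ = ∑' i : ℕ, μ {ω | i < N ω} * c := by
          refine tsum_congr fun i => ?_
          have hip : IndepFun (fun ω => if i < N ω then (1:ℝ≥0∞) else 0)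
              (fun ω => ((ξ i ω - 1 : ℕ) : ℝ≥0∞)) μ :=
            (hindNξ i).comp (measurable_from_top (f := fun n : ℕ => if i < n then (1:ℝ≥0∞) else 0))
              (measurable_from_top (f := fun n : ℕ => ((n - 1 : ℕ) : ℝ≥0∞)))
          have hf : Measurable (fun ω => if i < N ω then (1:ℝ≥0∞) else 0) :=
            (measurable_from_top (f := fun n : ℕ => if i < n then (1:ℝ≥0∞) else 0)).comp hNm
          have hg' : Measurable (fun ω => ((ξ i ω - 1 : ℕ) : ℝ≥0∞)) :=
            (measurable_from_top (f := fun n : ℕ => ((n - 1 : ℕ) : ℝ≥0∞))).comp (hξm i)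
          have hml := lintegral_mul_eq_lintegral_mul_lintegral_of_indepFun hf hg' hip
          simp only [Pi.mul_apply] at hml
          rw [hml, lint_ite_one' hNm, hmeanξ i]
      _ = (∑' i : ℕ, μ {ω | i < N ω}) * c := by rw [ENNReal.tsum_mul_right]
      _ = c := by
          have : ∑' i : ℕ, μ {ω | i < N ω} = 1 := by
            calc ∑' i : ℕ, μ {ω | i < N ω}
                = ∑' i : ℕ, ∫⁻ ω, (if i < N ω then (1:ℝ≥0∞) else 0) ∂μ := by
                  exact tsum_congr fun i => (lint_ite_one' hNm i).symm
              _ = ∫⁻ ω, ∑' i : ℕ, (if i < N ω then (1:ℝ≥0∞) else 0) ∂μ :=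
                  (lintegral_tsum fun i =>
                    ((measurable_from_top
                      (f := fun n : ℕ => if i < n then (1:ℝ≥0∞) else 0)).comp hNm).aemeasurable).symm
              _ = ∫⁻ ω, (N ω : ℝ≥0∞) ∂μ := lintegral_congr fun ω => tsum_ite_lt' (N ω)
              _ = 1 := hmeanN
          rw [this, one_mul]
  -- main identity from the RDE
  have hmain : (α : ℝ≥0∞) + c = m := by
    have h1 : ∫⁻ ω, ((P ω + g ω : ℕ) : ℝ≥0∞) ∂μ = m := by
      rw [hm, ← lintegral_map hcast (show Measurable (fun ω => P ω + g ω) from hPm.add hgm), hRDE, lintegral_map hcast hXm]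
    rw [← h1]
    have h2 : ∀ ω, ((P ω + g ω : ℕ) : ℝ≥0∞) = (P ω : ℝ≥0∞) + (g ω : ℝ≥0∞) := by
      intro ω; push_cast; ring
    have hPc : Measurable fun ω => (P ω : ℝ≥0∞) := hcast.comp hPm
    rw [lintegral_congr h2, lintegral_add_left hPc, hmeanP, hmeang]
  -- split X into (X-1)⁺ and the indicator of {X ≥ 1}
  have hsplit : m = c + p := by
    have h2 : ∀ ω, (X ω : ℝ≥0∞) = ((X ω - 1 : ℕ) : ℝ≥0∞)
        + (if 0 < X ω then (1:ℝ≥0∞) else 0) := by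
      intro ω
      rcases Nat.eq_zero_or_pos (X ω) with h | h
      · simp [h]
      · rw [if_pos h]
        norm_cast
        omega
    have hXc : Measurable fun ω => ((X ω - 1 : ℕ) : ℝ≥0∞) :=
      (measurable_from_top (f := fun n : ℕ => ((n - 1 : ℕ) : ℝ≥0∞))).comp hXm
    rw [hm, lintegral_congr h2, lintegral_add_left hXc, lint_ite_one' hXm]
    rfl
  -- finiteness
  have hmfin : m ≠ ⊤ := by
    have h := hint.hasFiniteIntegral
    rw [HasFiniteIntegral] at h
    have heq : ∀ ω, ‖(X ω : ℝ)‖ₑ = (X ω : ℝ≥0∞) := by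
      intro ω
      simp [Real.enorm_natCast]
    rw [lintegral_congr heq] at h
    exact h.ne
  have hcfin : c ≠ ⊤ := by
    refine ne_top_of_le_ne_top hmfin ?_
    rw [hc, hm]
    exact lintegral_mono fun ω => Nat.cast_le.mpr (Nat.sub_le _ _)
  -- conclude
  have hfinal : (α : ℝ≥0∞) = p := by
    have : c + (α : ℝ≥0∞) = c + p := by rw [add_comm c, hmain]; exact hsplit
    exact (ENNReal.add_right_inj hcfin).mp this
  have : {ω | 1 ≤ X ω} = {ω | 0 < X ω} := by ext ω; simp [Nat.lt_iff_add_one_le]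
  rw [ENNReal.ofReal_coe_nnreal]
  rw [hp] at hfinal
  exact hfinal.symm
end

section
/- Fix α ∈ (0, 1/2] and p ≥ 1 − α. Define g(s) = αs − α + (1 − s^{−1})p for s ∈ (0,1). Then g(s) < log s for all s ∈ (0,1). -/
/-- For `α ∈ (0,1/2]` and `p ≥ 1-α`, the function `g(s) = αs - α + (1-s⁻¹)p`
satisfies `g(s) < log s` for all `s ∈ (0,1)`. -/
theorem g_lt_log (α p : ℝ) (hα : α ∈ Set.Ioc (0 : ℝ) (1 / 2)) (hp : 1 - α ≤ p) :
    ∀ s ∈ Set.Ioo (0 : ℝ) 1, α * s - α + (1 - s⁻¹) * p < Real.log s := by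
  obtain ⟨hα0, hα2⟩ := hα
  set f : ℝ → ℝ := fun s => α * s - α + (1 - s⁻¹) * (1 - α) - Real.log s with hf
  have hderiv : ∀ s ∈ Set.Ioo (0:ℝ) 1,
      HasDerivAt f (α + s⁻¹ ^ 2 * (1 - α) - s⁻¹) s := by
    intro s hs
    have hs0 : s ≠ 0 := ne_of_gt hs.1
    have h1 : HasDerivAt (fun s : ℝ => α * s - α) α s := by
      simpa using ((hasDerivAt_id s).const_mul α).sub_const α
    have h2 : HasDerivAt (fun s : ℝ => (1 - s⁻¹) * (1 - α)) (s⁻¹ ^ 2 * (1 - α)) s := by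
      have h := ((hasDerivAt_inv hs0).const_sub 1).mul_const (1 - α)
      have : -(-(s ^ 2)⁻¹) * (1 - α) = s⁻¹ ^ 2 * (1 - α) := by
        field_simp
      simpa [this] using h
    have h3 : HasDerivAt Real.log s⁻¹ s := Real.hasDerivAt_log hs0
    exact (h1.add h2).sub h3
  have hmono : StrictMonoOn f (Set.Ioc (0:ℝ) 1) := by
    apply strictMonoOn_of_deriv_pos (convex_Ioc 0 1)
    · apply ContinuousOn.sub
      · apply ContinuousOn.add
        · exact (continuousOn_const.mul continuousOn_id).sub continuousOn_const
        · exact (continuousOn_const.sub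
            ((continuousOn_inv₀).mono (fun x hx => ne_of_gt hx.1))).mul continuousOn_const
      · exact Real.continuousOn_log.mono (fun x hx => ne_of_gt hx.1)
    · intro s hs
      rw [interior_Ioc] at hs
      rw [(hderiv s hs).deriv]
      have hs0 : 0 < s := hs.1
      have hs1 : s < 1 := hs.2
      have hsq : (0:ℝ) < s ^ 2 := by positivity
      have key : (α + s⁻¹ ^ 2 * (1 - α) - s⁻¹) * s ^ 2 = (1 - s) * ((1 - α) - α * s) := by
        field_simp
        ring
      have h1 : (0:ℝ) < 1 - s := by linarith
      have h2 : (0:ℝ) < (1 - α) - α * s := by nlinarith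
      have := mul_pos h1 h2
      rw [← key] at this
      have hd := div_pos this hsq
      rwa [mul_div_cancel_right₀ _ (ne_of_gt hsq)] at hd
  intro s hs
  have hs0 : 0 < s := hs.1
  have hs1 : s < 1 := hs.2
  have hlt : f s < f 1 :=
    hmono ⟨hs0, hs1.le⟩ ⟨one_pos, le_refl 1⟩ hs1
  have hf1 : f 1 = 0 := by simp [hf]
  have hfs : f s < 0 := by rwa [hf1] at hlt
  have hinv : 1 - s⁻¹ < 0 := by
    have : 1 < s⁻¹ := (one_lt_inv₀ hs0).mpr hs1
    linarith
  have hle : (1 - s⁻¹) * p ≤ (1 - s⁻¹) * (1 - α) :=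
    mul_le_mul_of_nonpos_left hp hinv.le
  have : α * s - α + (1 - s⁻¹) * (1 - α) < Real.log s := by
    have := hfs
    simp only [hf] at this
    linarith
  linarith
end

section
/- Let G be the probability generating function of a nonnegative integer random variable X with E[X] < ∞ satisfying the functional equation G(s) = exp(s^{−1}G(s) + αs − α − 1 + (1 − s^{−1})(1−α)) on (0,1], where α ∈ (0,1/2]. If m = lim_{s↑1} G'(s) exists in [0,∞), then m² − 2m + 2α = 0, so m ∈ {1 − √(1−2α), 1 + √(1−2α)}. -/
open MeasureTheory Filter Set Topology

/-- Let `G` be the probability generating function of a nonnegative integer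
random variable `X` with finite mean, satisfying the functional equation
`G(s) = exp(s⁻¹G(s) + αs - α - 1 + (1-s⁻¹)(1-α))` on `(0,1]`, with `α ∈ (0,1/2]`.
If `m = lim_{s↑1} G'(s)` exists in `[0,∞)`, then `m² - 2m + 2α = 0`, so
`m ∈ {1 - √(1-2α), 1 + √(1-2α)}`. -/
theorem pgf_derivative_limit_quadratic
    {Ω : Type*} [MeasurableSpace Ω] (μ : Measure Ω) [IsProbabilityMeasure μ]
    (X : Ω → ℕ) (hXm : Measurable X)
    (hint : Integrable (fun ω => (X ω : ℝ)) μ)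
    (α : ℝ) (hα : α ∈ Set.Ioc (0 : ℝ) (1 / 2))
    (G : ℝ → ℝ) (hG : ∀ s : ℝ, G s = ∫ ω, s ^ (X ω) ∂μ)
    (hfe : ∀ s ∈ Set.Ioc (0 : ℝ) 1,
      G s = Real.exp (s⁻¹ * G s + α * s - α - 1 + (1 - s⁻¹) * (1 - α)))
    (m : ℝ) (hm0 : 0 ≤ m)
    (hm : Filter.Tendsto (deriv G) (nhdsWithin 1 (Set.Iio 1)) (nhds m)) :
    m ^ 2 - 2 * m + 2 * α = 0
      ∧ (m = 1 - Real.sqrt (1 - 2 * α) ∨ m = 1 + Real.sqrt (1 - 2 * α)) := by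
  obtain ⟨hα0, hα2⟩ := hα
  have hG1 : G 1 = 1 := by rw [hG]; simp
  set C := ∫ ω, (X ω : ℝ) ∂μ with hC
  -- measurability of integrands
  have hmeas : ∀ t : ℝ, AEStronglyMeasurable (fun ω => t ^ X ω) μ := fun t =>
    (measurable_from_top.comp hXm : Measurable fun ω => t ^ X ω).aestronglyMeasurable
  have hmeas' : ∀ t : ℝ, AEStronglyMeasurable (fun ω => (X ω : ℝ) * t ^ (X ω - 1)) μ := fun t =>
    (Measurable.aestronglyMeasurable (by
      exact (measurable_from_top (f := fun n : ℕ => (n : ℝ) * t ^ (n - 1))).comp hXm))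
  have hintt : ∀ t : ℝ, |t| ≤ 1 → Integrable (fun ω => t ^ X ω) μ := by
    intro t ht
    refine (integrable_const (1:ℝ)).mono (hmeas t) ?_
    filter_upwards with ω
    simp only [norm_pow, Real.norm_eq_abs, abs_one]
    exact pow_le_one₀ (abs_nonneg t) ht
  -- differentiability on (0,1)
  have hdiff : ∀ s ∈ Set.Ioo (0:ℝ) 1, HasDerivAt G (deriv G s) s := by
    intro s hs
    have key : HasDerivAt (fun t => ∫ ω, t ^ X ω ∂μ)
        (∫ ω, (X ω : ℝ) * s ^ (X ω - 1) ∂μ) s := by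
      have hε0 : 0 < min s (1 - s) := lt_min hs.1 (by linarith [hs.2])
      have hball : ∀ x ∈ Metric.ball s (min s (1 - s)), |x| ≤ 1 := by
        intro x hx
        rw [Metric.mem_ball, Real.dist_eq] at hx
        have h1 := abs_lt.1 hx
        have h2 := min_le_left s (1 - s)
        have h3 := min_le_right s (1 - s)
        rw [abs_le]; constructor <;> nlinarith
      refine (hasDerivAt_integral_of_dominated_loc_of_deriv_le (F' := fun t ω => (X ω : ℝ) * t ^ (X ω - 1)) (Metric.ball_mem_nhds s hε0)
        (Filter.Eventually.of_forall fun x => hmeas x) (hintt s (by rw [abs_le]; constructor <;> nlinarith [hs.1, hs.2]))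
        (hmeas' s) ?_ hint ?_).2
      · filter_upwards with ω
        intro x hx
        have hx1 := hball x hx
        simp only [Real.norm_eq_abs, abs_mul, abs_pow, Nat.abs_cast]
        calc (X ω : ℝ) * |x| ^ (X ω - 1) ≤ (X ω : ℝ) * 1 :=
              mul_le_mul_of_nonneg_left (pow_le_one₀ (abs_nonneg x) hx1) (Nat.cast_nonneg _)
          _ = (X ω : ℝ) := mul_one _
      · filter_upwards with ω
        intro x hx
        exact hasDerivAt_pow (X ω) x
    have hGfun : G = fun t => ∫ ω, t ^ X ω ∂μ := funext hG
    rw [hGfun]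
    exact key.differentiableAt.hasDerivAt
  -- quantitative continuity bound
  have hbound : ∀ t ∈ Set.Icc (0:ℝ) 1, |G t - 1| ≤ (1 - t) * C := by
    intro t ht
    rw [hG t]
    have hintt' : Integrable (fun ω => t ^ X ω) μ := hintt t (by rw [abs_le]; constructor <;> linarith [ht.1, ht.2])
    have hsub : Integrable (fun ω => t ^ X ω - 1) μ := hintt'.sub (integrable_const 1)
    have e1 : (∫ ω, t ^ X ω ∂μ) - 1 = ∫ ω, (t ^ X ω - 1) ∂μ := by
      rw [integral_sub hintt' (integrable_const 1)]; simp
    rw [e1]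
    calc |∫ ω, (t ^ X ω - 1) ∂μ| ≤ ∫ ω, |t ^ X ω - 1| ∂μ := by
          simpa [Real.norm_eq_abs] using
            norm_integral_le_integral_norm (μ := μ) (fun ω => t ^ X ω - 1)
      _ ≤ ∫ ω, (1 - t) * (X ω : ℝ) ∂μ := by
          refine integral_mono hsub.abs (hint.const_mul _) ?_
          intro ω
          show |t ^ X ω - 1| ≤ (1 - t) * (X ω : ℝ)
          have h2 : (1:ℝ) + (X ω : ℝ) * (t - 1) ≤ t ^ X ω := by
            have := one_add_mul_le_pow (a := t - 1) (by linarith [ht.1]) (X ω)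
            simpa using this
          have h3 : t ^ X ω ≤ 1 := pow_le_one₀ ht.1 ht.2
          rw [abs_sub_comm, abs_of_nonneg (by linarith)]
          nlinarith
      _ = (1 - t) * C := integral_const_mul _ _
  -- convergence of G to 1
  have hGto1 : ∀ l : Filter ℝ, l ≤ nhds 1 → (∀ᶠ t in l, t ∈ Set.Icc (0:ℝ) 1) →
      Tendsto G l (nhds 1) := by
    intro l hl hev
    rw [tendsto_iff_dist_tendsto_zero]
    have hcont : Tendsto (fun t : ℝ => (1 - t) * C) (nhds (1:ℝ)) (nhds 0) := by
      have h : Continuous fun t : ℝ => (1 - t) * C := by continuity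
      simpa using h.tendsto 1
    exact squeeze_zero' (hev.mono fun t _ => dist_nonneg)
      (hev.mono fun t ht => by rw [Real.dist_eq]; exact hbound t ht)
      (hcont.mono_left hl)
  have hIoo : Set.Ioo (0:ℝ) 1 ∈ nhdsWithin (1:ℝ) (Set.Iio 1) :=
    mem_nhdsWithin.2 ⟨Set.Ioi 0, isOpen_Ioi, by norm_num, fun x hx => ⟨hx.1, hx.2⟩⟩
  have hGl : Tendsto G (nhdsWithin 1 (Set.Iio 1)) (nhds 1) := by
    refine hGto1 _ nhdsWithin_le_nhds ?_
    filter_upwards [hIoo] with t ht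
    exact ⟨ht.1.le, ht.2.le⟩
  -- continuity of G on [a,1]
  have hcontOn : ∀ a ∈ Set.Ioo (0:ℝ) 1, ContinuousOn G (Set.Icc a 1) := by
    intro a ha x hx
    rcases eq_or_lt_of_le hx.2 with h | h
    · subst h
      have : Tendsto G (nhdsWithin 1 (Set.Icc a 1)) (nhds 1) := by
        refine hGto1 _ nhdsWithin_le_nhds ?_
        filter_upwards [eventually_mem_nhdsWithin] with t ht
        exact ⟨le_trans ha.1.le ht.1, ht.2⟩
      rw [ContinuousWithinAt, hG1]
      exact this
    · exact ((hdiff x ⟨lt_of_lt_of_le ha.1 hx.1, h⟩).continuousAt).continuousWithinAt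
  -- positivity of G
  have hGpos : ∀ s ∈ Set.Ioc (0:ℝ) 1, 0 < G s := fun s hs => by
    rw [hfe s hs]; exact Real.exp_pos _
  -- the differentiated functional equation identity
  have hid : ∀ s ∈ Set.Ioo (0:ℝ) 1,
      s * deriv G s * (s - G s) = G s * (α * s ^ 2 + 1 - α - G s) := by
    intro s hs
    have hs0 : s ≠ 0 := ne_of_gt hs.1
    have hs2 : s ^ 2 ≠ 0 := pow_ne_zero 2 hs0
    have hd := hdiff s hs
    have h1 : HasDerivAt (fun t : ℝ => t⁻¹ * G t)
        (-(s^2)⁻¹ * G s + s⁻¹ * deriv G s) s := (hasDerivAt_inv hs0).mul hd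
    have h3 : HasDerivAt (fun t : ℝ => α * t) α s := by
      simpa using (hasDerivAt_id s).const_mul α
    have h2 : HasDerivAt (fun t : ℝ => (1 - t⁻¹) * (1 - α)) ((s^2)⁻¹ * (1-α)) s := by
      have := ((hasDerivAt_inv hs0).const_sub 1).mul_const (1-α)
      simpa using this
    have hinner : HasDerivAt (fun t => t⁻¹ * G t + α * t - α - 1 + (1 - t⁻¹) * (1 - α))
        ((-(s^2)⁻¹ * G s + s⁻¹ * deriv G s + α) + (s^2)⁻¹ * (1-α)) s :=
      (((h1.add h3).sub_const α).sub_const 1).add h2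
    have hφ := hinner.exp
    have hev : G =ᶠ[nhds s]
        (fun t => Real.exp (t⁻¹ * G t + α * t - α - 1 + (1 - t⁻¹) * (1 - α))) := by
      filter_upwards [Ioo_mem_nhds hs.1 hs.2] with t ht
      exact hfe t ⟨ht.1, ht.2.le⟩
    have hφ' : HasDerivAt G
        (Real.exp (s⁻¹ * G s + α * s - α - 1 + (1 - s⁻¹) * (1 - α)) *
          ((-(s^2)⁻¹ * G s + s⁻¹ * deriv G s + α) + (s^2)⁻¹ * (1-α))) s :=
      hφ.congr_of_eventuallyEq hev
    have hde := hd.unique hφ'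
    rw [← hfe s ⟨hs.1, hs.2.le⟩] at hde
    field_simp at hde
    have h9 : (s * deriv G s * (s - G s) - G s * (α * s ^ 2 + 1 - α - G s)) * s ^ 3 = 0 := by
      linear_combination s ^ 3 * hde
    rcases mul_eq_zero.1 h9 with h' | h'
    · linarith [sub_eq_zero.1 h']
    · exact absurd h' (pow_ne_zero 3 hs0)
  -- G s ≠ s on (0,1)
  have hDne : ∀ s ∈ Set.Ioo (0:ℝ) 1, G s ≠ s := by
    intro s hs h
    have h1 := hid s hs
    rw [h] at h1
    have h2 : α * s ^ 2 + 1 - α - s = 0 := by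
      have hs0 : s ≠ 0 := ne_of_gt hs.1
      have : s * (α * s ^ 2 + 1 - α - s) = 0 := by linarith [h1]
      rcases mul_eq_zero.1 this with h' | h'
      · exact absurd h' hs0
      · exact h'
    nlinarith [mul_pos (sub_pos.2 hs.2) (show (0:ℝ) < 1 - α * (1 + s) by nlinarith [hs.2])]
  -- Cauchy MVT step
  have key : ∀ s ∈ Set.Ioo (0:ℝ) 1, ∃ c ∈ Set.Ioo s 1,
      G s * (2*α*c - deriv G c) = s * deriv G s * (1 - deriv G c) := by
    intro s hs
    have hNc : ContinuousOn (fun t => α * t^2 + (1-α) - G t) (Set.Icc s 1) := by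
      exact (((continuous_const.mul (continuous_pow 2)).add continuous_const).continuousOn).sub (hcontOn s hs)
    have hDc : ContinuousOn (fun t : ℝ => t - G t) (Set.Icc s 1) :=
      (continuous_id.continuousOn).sub (hcontOn s hs)
    have hNd : ∀ x ∈ Set.Ioo s 1, HasDerivAt (fun t => α * t^2 + (1-α) - G t)
        (2*α*x - deriv G x) x := by
      intro x hx
      have hx' : x ∈ Set.Ioo (0:ℝ) 1 := ⟨lt_trans hs.1 hx.1, hx.2⟩
      have := (((hasDerivAt_pow 2 x).const_mul α).add_const (1-α)).sub (hdiff x hx')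
      exact this.congr_deriv (by ring)
    have hDd : ∀ x ∈ Set.Ioo s 1, HasDerivAt (fun t : ℝ => t - G t) (1 - deriv G x) x := by
      intro x hx
      exact (hasDerivAt_id x).sub (hdiff x ⟨lt_trans hs.1 hx.1, hx.2⟩)
    obtain ⟨c, hc, hceq⟩ := exists_ratio_hasDerivAt_eq_ratio_slope
      (fun t => α * t^2 + (1-α) - G t) (fun t => 2*α*t - deriv G t) hs.2 hNc hNd
      (fun t : ℝ => t - G t) (fun t => 1 - deriv G t) hDc hDd
    refine ⟨c, hc, ?_⟩
    simp only [hG1, one_pow, mul_one] at hceq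
    have hgs : G s - s ≠ 0 := sub_ne_zero.2 (hDne s hs)
    have hid' := hid s hs
    have h6 : (G s - s) * (G s * (2*α*c - deriv G c) - s * deriv G s * (1 - deriv G c)) = 0 := by
      linear_combination G s * hceq + (1 - deriv G c) * hid'
    rcases mul_eq_zero.1 h6 with h' | h'
    · exact absurd h' hgs
    · linarith [h']
  choose! c hc hceq using key
  -- limit bookkeeping
  have htc : Tendsto c (nhdsWithin 1 (Set.Iio 1)) (nhdsWithin 1 (Set.Iio 1)) := by
    rw [tendsto_nhdsWithin_iff]
    constructor
    · refine tendsto_of_tendsto_of_tendsto_of_le_of_le'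
        (tendsto_id.mono_left nhdsWithin_le_nhds) tendsto_const_nhds ?_ ?_
      · filter_upwards [hIoo] with s hs; exact (hc s hs).1.le
      · filter_upwards [hIoo] with s hs; exact (hc s hs).2.le
    · filter_upwards [hIoo] with s hs; exact (hc s hs).2
  have hcl : Tendsto c (nhdsWithin 1 (Set.Iio 1)) (nhds 1) := htc.mono_right nhdsWithin_le_nhds
  have hdc : Tendsto (fun s => deriv G (c s)) (nhdsWithin 1 (Set.Iio 1)) (nhds m) := hm.comp htc
  have hsid : Tendsto (fun s : ℝ => s) (nhdsWithin 1 (Set.Iio 1)) (nhds 1) :=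
    tendsto_id.mono_left nhdsWithin_le_nhds
  have hL : Tendsto (fun s => G s * (2*α*(c s) - deriv G (c s)))
      (nhdsWithin 1 (Set.Iio 1)) (nhds (1 * (2*α*1 - m))) :=
    hGl.mul (((tendsto_const_nhds.mul hcl)).sub hdc)
  have hR : Tendsto (fun s => s * deriv G s * (1 - deriv G (c s)))
      (nhdsWithin 1 (Set.Iio 1)) (nhds (1 * m * (1 - m))) :=
    (hsid.mul hm).mul (tendsto_const_nhds.sub hdc)
  have heqev : (fun s => G s * (2*α*(c s) - deriv G (c s)))
      =ᶠ[nhdsWithin 1 (Set.Iio 1)] (fun s => s * deriv G s * (1 - deriv G (c s))) := by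
    filter_upwards [hIoo] with s hs
    exact hceq s hs
  have hfin : (1:ℝ) * (2*α*1 - m) = 1 * m * (1 - m) :=
    tendsto_nhds_unique (Filter.Tendsto.congr' heqev hL) hR
  have hq : m ^ 2 - 2 * m + 2 * α = 0 := by nlinarith [hfin]
  refine ⟨hq, ?_⟩
  have h1 : Real.sqrt (1 - 2*α) = |m - 1| := by
    rw [show (1 - 2*α : ℝ) = (m-1)^2 by nlinarith, Real.sqrt_sq_eq_abs]
  rcases le_or_gt m 1 with h | h
  · left; rw [h1, abs_of_nonpos (by linarith)]; ring
  · right; rw [h1, abs_of_pos (by linarith)]; ring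
end

section
/- Let X_1, X_2, ... be i.i.d. nonnegative integer random variables with E[X_1] = 1 − √(1−2α) and P(X_1 = 0) = 1 − α for some α ∈ (0,1/2). Let C_n = n − Σ_{k=1}^n X_k. Then P(C_n ≥ 0 for all n ≥ 1) = √(1−2α)/(1−α). -/
open MeasureTheory ProbabilityTheory Filter Set Topology
open scoped Classical ENNReal

/-! ### Deterministic ladder-point counting -/

noncomputable def lcount (u : ℕ → ℤ) (N : ℕ) : ℤ :=
  ∑ n ∈ Finset.range N, if ∀ m, n < m → u n < u m then (1:ℤ) else 0

noncomputable def mINF (u : ℕ → ℤ) (N : ℕ) : ℤ := sInf (u '' Ici N)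

lemma det_bddBelow {u : ℕ → ℤ} (htop : Tendsto u atTop atTop) (N : ℕ) :
    BddBelow (u '' Ici N) := by
  obtain ⟨n₀, hn₀⟩ := (tendsto_atTop.1 htop 0).exists_forall_of_atTop
  refine ⟨(Finset.range (n₀+1)).inf' (by simp) (fun i => min (u i) 0), ?_⟩
  rintro x ⟨n, -, rfl⟩
  rcases le_or_gt n₀ n with h | h
  · calc (Finset.range (n₀+1)).inf' (by simp) (fun i => min (u i) 0)
        ≤ min (u n₀) 0 := Finset.inf'_le _ (by simp)
    _ ≤ 0 := min_le_right _ _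
    _ ≤ u n := hn₀ n h
  · calc (Finset.range (n₀+1)).inf' (by simp) (fun i => min (u i) 0)
        ≤ min (u n) 0 := Finset.inf'_le _ (by simp [Finset.mem_range]; omega)
    _ ≤ u n := min_le_left _ _

lemma mINF_mem {u : ℕ → ℤ} (htop : Tendsto u atTop atTop) (N : ℕ) :
    mINF u N ∈ u '' Ici N :=
  Int.csInf_mem ⟨u N, ⟨N, mem_Ici.2 le_rfl, rfl⟩⟩ (det_bddBelow htop N)

lemma mINF_le {u : ℕ → ℤ} (htop : Tendsto u atTop atTop) {N n : ℕ} (h : N ≤ n) :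
    mINF u N ≤ u n :=
  csInf_le (det_bddBelow htop N) ⟨n, h, rfl⟩

lemma mINF_step {u : ℕ → ℤ} (h1 : ∀ n, u (n+1) ≤ u n + 1)
    (htop : Tendsto u atTop atTop) (N : ℕ) :
    mINF u (N+1) = mINF u N + (if ∀ m, N < m → u N < u m then (1:ℤ) else 0) := by
  have hins : u '' Ici N = insert (u N) (u '' Ici (N+1)) := by
    rw [show Ici N = insert N (Ici (N+1)) by ext n; simp; omega, image_insert_eq]
  have hminN : mINF u N = min (u N) (mINF u (N+1)) := by
    rw [mINF, hins, csInf_insert (det_bddBelow htop (N+1)) ⟨u (N+1), ⟨N+1, mem_Ici.2 le_rfl, rfl⟩⟩]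
    rfl
  split_ifs with h
  · -- ladder case : mINF (N+1) = u N + 1, mINF N = u N
    have hup : mINF u (N+1) ≤ u N + 1 := (mINF_le htop le_rfl).trans (h1 N)
    have hlow : u N + 1 ≤ mINF u (N+1) := by
      rw [mINF]
      refine le_csInf ⟨u (N+1), ⟨N+1, mem_Ici.2 le_rfl, rfl⟩⟩ ?_
      rintro b ⟨n, hn, rfl⟩
      exact Int.add_one_le_iff.2 (h n (by simpa using hn))
    have heq : mINF u (N+1) = u N + 1 := le_antisymm hup hlow
    have h2 : mINF u N = u N := by rw [hminN, heq]; omega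
    rw [heq, h2]
  · push_neg at h
    obtain ⟨m, hm, hum⟩ := h
    have hle : mINF u (N+1) ≤ u N := (mINF_le htop (by omega : N+1 ≤ m)).trans hum
    rw [hminN, inf_eq_right.2 hle]; ring

lemma lcount_eq {u : ℕ → ℤ} (h1 : ∀ n, u (n+1) ≤ u n + 1)
    (htop : Tendsto u atTop atTop) (N : ℕ) :
    (lcount u N : ℤ) = mINF u N - mINF u 0 := by
  induction N with
  | zero => simp [lcount]
  | succ N ih =>
    rw [lcount, Finset.sum_range_succ, ← lcount, ih, mINF_step h1 htop N]
    ring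

lemma det_count {u : ℕ → ℤ} (h1 : ∀ n, u (n+1) ≤ u n + 1) {L : ℝ} (hLpos : 0 < L)
    (hL : Tendsto (fun n => (u n : ℝ)/n) atTop (𝓝 L)) :
    Tendsto (fun N => ((lcount u N : ℝ)) / N) atTop (𝓝 L) := by
  -- first, u tends to atTop
  have htop : Tendsto u atTop atTop := by
    rw [tendsto_atTop]
    intro b
    have h2 : ∀ᶠ n in atTop, L/2 < (u n : ℝ)/n :=
      hL.eventually (eventually_gt_nhds (by linarith))
    have h3 : Tendsto (fun n : ℕ => (n : ℝ) * (L/2)) atTop atTop :=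
      tendsto_natCast_atTop_atTop.atTop_mul_const (by linarith)
    filter_upwards [h2, h3.eventually_ge_atTop ((b:ℝ)), eventually_gt_atTop 0] with n hn hn' hnpos
    have hnR : (0:ℝ) < n := by exact_mod_cast hnpos
    have : (b:ℝ) ≤ (u n : ℝ) := by
      calc (b:ℝ) ≤ n * (L/2) := hn'
      _ ≤ n * ((u n : ℝ)/n) := by nlinarith
      _ = (u n : ℝ) := by field_simp
    exact_mod_cast this
  -- mINF u N / N tends to L
  have hm : Tendsto (fun N => ((mINF u N : ℝ)) / N) atTop (𝓝 L) := by
    rw [Metric.tendsto_atTop]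
    intro ε hε
    set ε₀ := min ε L with hε₀
    have hε₀pos : 0 < ε₀ := lt_min hε hLpos
    obtain ⟨N₁, hN₁⟩ := (Metric.tendsto_atTop.1 hL (ε₀/2) (by linarith))
    refine ⟨max N₁ 1, fun N hN => ?_⟩
    have hN1 : 1 ≤ N := le_trans (le_max_right _ _) hN
    have hNN₁ : N₁ ≤ N := le_trans (le_max_left _ _) hN
    have hNR : (0:ℝ) < N := by exact_mod_cast hN1
    -- bounds on u n / n for n ≥ N₁
    have hub : ∀ n, N₁ ≤ n → 1 ≤ n → (u n : ℝ) < n * (L + ε₀/2) ∧ (n:ℝ) * (L - ε₀/2) < u n := by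
      intro n hn hn1
      have := hN₁ n hn
      rw [Real.dist_eq, abs_lt] at this
      have hnR : (0:ℝ) < n := by exact_mod_cast hn1
      obtain ⟨ha, hb⟩ := this
      constructor
      · have hx : (u n : ℝ)/n < L + ε₀/2 := by linarith
        calc (u n:ℝ) = n * ((u n:ℝ)/n) := by field_simp
        _ < n * (L + ε₀/2) := by exact mul_lt_mul_of_pos_left hx hnR
      · have hx : L - ε₀/2 < (u n : ℝ)/n := by linarith
        calc (n:ℝ) * (L - ε₀/2) < n * ((u n:ℝ)/n) := mul_lt_mul_of_pos_left hx hnR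
        _ = u n := by field_simp
    -- upper bound
    have hup : (mINF u N : ℝ) < N * (L + ε₀/2) := by
      have := mINF_le htop (le_refl N)
      calc (mINF u N : ℝ) ≤ u N := by exact_mod_cast this
      _ < N * (L + ε₀/2) := (hub N hNN₁ hN1).1
    -- lower bound via attained min
    obtain ⟨n', hn', hval⟩ := mINF_mem htop N
    have hlow : (N:ℝ) * (L - ε₀/2) < (mINF u N : ℝ) := by
      have h2 := (hub n' (le_trans hNN₁ hn') (le_trans hN1 hn')).2
      have hmono : (N:ℝ) * (L - ε₀/2) ≤ (n':ℝ) * (L - ε₀/2) := by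
        have : (N:ℝ) ≤ n' := by exact_mod_cast hn'
        have hc : 0 ≤ L - ε₀/2 := by
          have : ε₀ ≤ L := min_le_right _ _
          linarith
        nlinarith
      rw [← hval]
      push_cast
      linarith
    rw [Real.dist_eq, abs_lt]
    have hd1 : (mINF u N : ℝ)/N < L + ε₀/2 := by rw [div_lt_iff₀ hNR]; linarith
    have hd2 : L - ε₀/2 < (mINF u N : ℝ)/N := by rw [lt_div_iff₀ hNR]; linarith
    have hεL : ε₀ ≤ ε := min_le_left _ _
    constructor <;> linarith
  -- conclude
  have hconst : Tendsto (fun N : ℕ => ((mINF u 0 : ℝ)) / N) atTop (𝓝 0) :=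
    tendsto_const_div_atTop_nhds_zero_nat _
  have := hm.sub hconst
  rw [sub_zero] at this
  refine this.congr (fun N => ?_)
  rw [lcount_eq h1 htop N]
  push_cast
  ring

/-! ### Probabilistic auxiliary lemmas : shift invariance of the sequence law -/

section Prob

variable {Ω : Type*} [MeasurableSpace Ω] (μ : Measure Ω) [IsProbabilityMeasure μ]
  (X : ℕ → Ω → ℕ)

lemma singleton_cyl (hmeas : ∀ i, Measurable (X i))
    (hindep : iIndepFun X μ)
    (hident : ∀ i, IdentDistrib (X i) (X 0) μ μ)
    (n : ℕ) (t : Finset ℕ) (v : {x // x ∈ t} → ℕ) :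
    μ ((fun ω (i : {x // x ∈ t}) => X (i + n) ω) ⁻¹' {v})
      = ∏ j ∈ t, μ (X 0 ⁻¹' {if h : j ∈ t then v ⟨j, h⟩ else 0}) := by
  have hset : (fun ω (i : {x // x ∈ t}) => X (i + n) ω) ⁻¹' {v}
      = ⋂ j ∈ t, X (j + n) ⁻¹' {if h : j ∈ t then v ⟨j, h⟩ else 0} := by
    ext ω
    simp only [Set.mem_preimage, Set.mem_singleton_iff, funext_iff, Set.mem_iInter]
    constructor
    · intro hv j hj
      simp only [dif_pos hj]
      exact hv ⟨j, hj⟩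
    · intro hv i
      have := hv i i.2
      simpa [i.2] using this
  have hemb : Function.Injective (fun j : ℕ => j + n) := add_left_injective n
  have key := hindep.measure_inter_preimage_eq_mul (t.map ⟨fun j => j + n, hemb⟩)
    (sets := fun k => {if h : k - n ∈ t then v ⟨k - n, h⟩ else 0})
    (fun i _ => MeasurableSet.of_discrete)
  have hInt : (⋂ k ∈ t.map ⟨fun j => j + n, hemb⟩,
      X k ⁻¹' {if h : k - n ∈ t then v ⟨k - n, h⟩ else 0})
      = ⋂ j ∈ t, X (j + n) ⁻¹' {if h : j ∈ t then v ⟨j, h⟩ else 0} := by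
    ext ω
    simp only [Set.mem_iInter, Finset.mem_map, Function.Embedding.coeFn_mk]
    constructor
    · intro h j hj
      have := h (j + n) ⟨j, hj, rfl⟩
      simpa [Nat.add_sub_cancel] using this
    · rintro h k ⟨j, hj, rfl⟩
      simpa [Nat.add_sub_cancel] using h j hj
  rw [hset, ← hInt, key, Finset.prod_map]
  refine Finset.prod_congr rfl (fun j hj => ?_)
  simp only [Function.Embedding.coeFn_mk, Nat.add_sub_cancel]
  exact (hident (j + n)).measure_mem_eq MeasurableSet.of_discrete

lemma cyl_shift (hmeas : ∀ i, Measurable (X i))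
    (hindep : iIndepFun X μ)
    (hident : ∀ i, IdentDistrib (X i) (X 0) μ μ)
    (n : ℕ) (t : Finset ℕ) (S : Set ({x // x ∈ t} → ℕ)) :
    μ ((fun ω (i : {x // x ∈ t}) => X (i + n) ω) ⁻¹' S)
      = μ ((fun ω (i : {x // x ∈ t}) => X (i + 0) ω) ⁻¹' S) := by
  have hdec : ∀ m : ℕ, (fun ω (i : {x // x ∈ t}) => X (i + m) ω) ⁻¹' S
      = ⋃ v ∈ S, (fun ω (i : {x // x ∈ t}) => X (i + m) ω) ⁻¹' {v} := by
    intro m; ext ω; simp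
  have hcnt : S.Countable := S.to_countable
  have hmeasf : ∀ m : ℕ, Measurable (fun ω (i : {x // x ∈ t}) => X (i + m) ω) :=
    fun m => measurable_pi_lambda _ (fun i => hmeas _)
  have hdisj : ∀ m : ℕ, S.PairwiseDisjoint
      (fun v => (fun ω (i : {x // x ∈ t}) => X (i + m) ω) ⁻¹' {v}) := by
    intro m v _ w _ hvw
    exact Disjoint.preimage _ (by simp [hvw])
  rw [hdec n, hdec 0, measure_biUnion hcnt (hdisj n)
      (fun v _ => (hmeasf n) (measurableSet_singleton v)),
    measure_biUnion hcnt (hdisj 0) (fun v _ => (hmeasf 0) (measurableSet_singleton v))]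
  congr 1
  ext v
  rw [singleton_cyl μ X hmeas hindep hident n t v,
    singleton_cyl μ X hmeas hindep hident 0 t v]

/-- The law of the shifted sequence equals the law of the sequence. -/
lemma shift_invariant (hmeas : ∀ i, Measurable (X i))
    (hindep : iIndepFun X μ)
    (hident : ∀ i, IdentDistrib (X i) (X 0) μ μ)
    (n : ℕ) {E : Set (ℕ → ℕ)} (hE : MeasurableSet E) :
    μ ((fun ω (j : ℕ) => X (j + n) ω) ⁻¹' E) = μ ((fun ω (j : ℕ) => X (j + 0) ω) ⁻¹' E) := by
  have hmeasf : ∀ m : ℕ, Measurable (fun ω (j : ℕ) => X (j + m) ω) :=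
    fun m => measurable_pi_lambda _ (fun j => hmeas _)
  have hmap : μ.map (fun ω (j : ℕ) => X (j + n) ω) = μ.map (fun ω (j : ℕ) => X (j + 0) ω) := by
    refine ext_of_generate_finite (measurableCylinders (fun _ : ℕ => ℕ))
      generateFrom_measurableCylinders.symm isPiSystem_measurableCylinders (fun s hs => ?_) ?_
    · obtain ⟨t, S, hS, rfl⟩ := (mem_measurableCylinders _).mp hs
      rw [Measure.map_apply (hmeasf n) (hS.cylinder), Measure.map_apply (hmeasf 0) (hS.cylinder)]
      exact cyl_shift μ X hmeas hindep hident n t S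
    · rw [Measure.map_apply (hmeasf n) MeasurableSet.univ,
        Measure.map_apply (hmeasf 0) MeasurableSet.univ, Set.preimage_univ,
        Set.preimage_univ]
  rw [← Measure.map_apply (hmeasf n) hE, ← Measure.map_apply (hmeasf 0) hE, hmap]

end Prob

/-- Let `X₁, X₂, …` be i.i.d. nonnegative integer random variables with
`E[X₁] = 1 - √(1-2α)` and `P(X₁ = 0) = 1 - α` for some `α ∈ (0,1/2)`, and let
`Cₙ = n - Σ_{k=1}^n X_k`. Then `P(Cₙ ≥ 0 for all n ≥ 1) = √(1-2α)/(1-α)`. -/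
theorem walk_stays_nonneg_prob
    {Ω : Type*} [MeasurableSpace Ω] (μ : Measure Ω) [IsProbabilityMeasure μ]
    (α : ℝ) (hα : α ∈ Set.Ioo (0 : ℝ) (1 / 2))
    (X : ℕ → Ω → ℕ) (hmeas : ∀ i, Measurable (X i))
    (hindep : iIndepFun X μ)
    (hident : ∀ i, IdentDistrib (X i) (X 0) μ μ)
    (hint : Integrable (fun ω => (X 0 ω : ℝ)) μ)
    (hmean : ∫ ω, (X 0 ω : ℝ) ∂μ = 1 - Real.sqrt (1 - 2 * α))
    (hzero : μ {ω | X 0 ω = 0} = ENNReal.ofReal (1 - α)) :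
    μ {ω | ∀ n, 1 ≤ n → ∑ k ∈ Finset.range n, X k ω ≤ n}
      = ENNReal.ofReal (Real.sqrt (1 - 2 * α) / (1 - α)) := by
  obtain ⟨hα0, hα2⟩ := hα
  set M : ℝ := Real.sqrt (1 - 2 * α) with hM
  have hMpos : 0 < M := Real.sqrt_pos.2 (by linarith)
  have h1α : 0 < 1 - α := by linarith
  -- the two events on the canonical sequence space
  set EA : Set (ℕ → ℕ) := {f | ∀ j, 1 ≤ j → ∑ i ∈ Finset.range j, f i < j} with hEA
  set EB : Set (ℕ → ℕ) := {f | ∀ j, 1 ≤ j → ∑ i ∈ Finset.range j, f i ≤ j} with hEB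
  have hsummeas : ∀ j : ℕ, Measurable (fun f : ℕ → ℕ => ∑ i ∈ Finset.range j, f i) :=
    fun j => Finset.measurable_sum _ (fun i _ => measurable_pi_apply i)
  have hEAmeas : MeasurableSet EA := by
    have : EA = ⋂ j : ℕ, (fun f : ℕ → ℕ => ∑ i ∈ Finset.range j, f i) ⁻¹'
        {k | 1 ≤ j → k < j} := by
      ext f; simp [hEA]
    rw [this]
    exact MeasurableSet.iInter (fun j => (hsummeas j) MeasurableSet.of_discrete)
  have hEBmeas : MeasurableSet EB := by
    have : EB = ⋂ j : ℕ, (fun f : ℕ → ℕ => ∑ i ∈ Finset.range j, f i) ⁻¹'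
        {k | 1 ≤ j → k ≤ j} := by
      ext f; simp [hEB]
    rw [this]
    exact MeasurableSet.iInter (fun j => (hsummeas j) MeasurableSet.of_discrete)
  set seq : ℕ → Ω → (ℕ → ℕ) := fun m ω j => X (j + m) ω with hseq
  have hseqmeas : ∀ m, Measurable (seq m) := fun m => measurable_pi_lambda _ (fun j => hmeas _)
  set p : ℝ≥0∞ := μ (seq 0 ⁻¹' EA) with hp0
  have hAshift : ∀ n, μ (seq n ⁻¹' EA) = p :=
    fun n => shift_invariant μ X hmeas hindep hident n hEAmeas
  -- Step 1 : p = ofReal M  (ladder point argument)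
  have hp : p = ENNReal.ofReal M := by
    -- SLLN
    have hcast : Measurable (fun k : ℕ => (k : ℝ)) := Measurable.of_discrete
    have hXr : iIndepFun (fun i ω => (X i ω : ℝ)) μ :=
      hindep.comp (fun _ k => (k : ℝ)) (fun i => hcast)
    have hidentr : ∀ i, IdentDistrib (fun ω => (X i ω : ℝ)) (fun ω => (X 0 ω : ℝ)) μ μ :=
      fun i => (hident i).comp hcast
    have hslln := strong_law_ae (fun i ω => (X i ω : ℝ)) hint
      (fun i j hij => hXr.indepFun hij) hidentr
    rw [hmean] at hslln
    -- the indicator averages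
    set A : ℕ → Set Ω := fun n => seq n ⁻¹' EA with hA
    have hAmeas : ∀ n, MeasurableSet (A n) := fun n => (hseqmeas n) hEAmeas
    set F : ℕ → Ω → ℝ≥0∞ := fun N ω =>
      (N : ℝ≥0∞)⁻¹ * ∑ n ∈ Finset.range N, (A n).indicator (fun _ => (1:ℝ≥0∞)) ω with hF
    have hFmeas : ∀ N, Measurable (F N) := by
      intro N
      exact (Finset.measurable_sum _ (fun n _ =>
        measurable_const.indicator (hAmeas n))).const_mul _
    have hFbound : ∀ N ω, F N ω ≤ 1 := by
      intro N ω
      have hsum : ∑ n ∈ Finset.range N, (A n).indicator (fun _ => (1:ℝ≥0∞)) ω ≤ N := by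
        calc ∑ n ∈ Finset.range N, (A n).indicator (fun _ => (1:ℝ≥0∞)) ω
            ≤ ∑ _n ∈ Finset.range N, 1 :=
              Finset.sum_le_sum (fun n _ => Set.indicator_le_self' (by simp) ω)
        _ = N := by simp
      rcases Nat.eq_zero_or_pos N with h0 | hpos
      · simp [hF, h0]
      · calc F N ω ≤ (N : ℝ≥0∞)⁻¹ * N := by
              exact mul_le_mul_right hsum _
        _ = 1 := ENNReal.inv_mul_cancel
              (by exact_mod_cast (show N ≠ 0 by omega)) (ENNReal.natCast_ne_top N)
    -- integral of F N is p for N ≥ 1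
    have hFint : ∀ N : ℕ, 1 ≤ N → ∫⁻ ω, F N ω ∂μ = p := by
      intro N hN
      rw [hF]
      rw [lintegral_const_mul _ (Finset.measurable_sum _ (fun n _ =>
        measurable_const.indicator (hAmeas n)))]
      rw [lintegral_finset_sum _ (fun n _ => measurable_const.indicator (hAmeas n))]
      have : ∀ n ∈ Finset.range N, ∫⁻ ω, (A n).indicator (fun _ => (1:ℝ≥0∞)) ω ∂μ = p := by
        intro n _
        rw [show ((fun _ => (1:ENNReal)) : Ω → ENNReal) = 1 from rfl, lintegral_indicator_one (hAmeas n)]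
        exact hAshift n
      rw [Finset.sum_congr rfl this, Finset.sum_const, Finset.card_range, nsmul_eq_mul,
        ← mul_assoc, ENNReal.inv_mul_cancel (by exact_mod_cast (by omega : N ≠ 0))
          (ENNReal.natCast_ne_top N), one_mul]
    -- pointwise convergence
    have hlim : ∀ᵐ ω ∂μ, Tendsto (fun N => F N ω) atTop (𝓝 (ENNReal.ofReal M)) := by
      filter_upwards [hslln] with ω hω
      set u : ℕ → ℤ := fun n => (n : ℤ) - ∑ k ∈ Finset.range n, (X k ω : ℤ) with hu
      have h1 : ∀ n, u (n+1) ≤ u n + 1 := by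
        intro n
        have : u (n+1) = u n + 1 - (X n ω : ℤ) := by
          simp only [hu, Finset.sum_range_succ]
          push_cast
          ring
        omega
      have huL : Tendsto (fun n : ℕ => (u n : ℝ)/n) atTop (𝓝 M) := by
        have h2 : Tendsto (fun n : ℕ =>
            1 - (n:ℝ)⁻¹ • (∑ i ∈ Finset.range n, (X i ω : ℝ))) atTop (𝓝 (1 - (1 - M))) :=
          tendsto_const_nhds.sub hω
        rw [show (1 : ℝ) - (1 - M) = M by ring] at h2
        refine h2.congr' ?_
        filter_upwards [eventually_ge_atTop 1] with n hn
        have hnR : (n:ℝ) ≠ 0 := Nat.cast_ne_zero.2 (by omega)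
        simp only [hu, smul_eq_mul]
        push_cast
        field_simp
      have hdet := det_count h1 hMpos huL
      -- identify the ladder condition with membership in A n
      have hkey : ∀ n j : ℕ, u (n + j)
          = u n + j - ∑ i ∈ Finset.range j, (X (i + n) ω : ℤ) := by
        intro n j
        have hsum : ∑ k ∈ Finset.range (n + j), (X k ω : ℤ)
            = ∑ k ∈ Finset.range n, (X k ω : ℤ)
              + ∑ i ∈ Finset.range j, (X (n + i) ω : ℤ) := Finset.sum_range_add _ n j
        have hsum2 : ∑ i ∈ Finset.range j, (X (n + i) ω : ℤ)
            = ∑ i ∈ Finset.range j, (X (i + n) ω : ℤ) := by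
          refine Finset.sum_congr rfl (fun i _ => by rw [add_comm])
        simp only [hu, hsum, hsum2]
        push_cast
        ring
      have hmem : ∀ n : ℕ, ω ∈ A n ↔ (∀ m, n < m → u n < u m) := by
        intro n
        have hAn : ω ∈ A n ↔ ∀ j, 1 ≤ j → ∑ i ∈ Finset.range j, X (i + n) ω < j := by
          simp [hA, hseq, hEA]
        rw [hAn]
        constructor
        · intro h m hm
          have hj : m = n + (m - n) := by omega
          rw [hj, hkey n (m - n)]
          have h2 := h (m - n) (by omega)
          have h3 : (∑ i ∈ Finset.range (m - n), (X (i + n) ω : ℤ)) < (m - n : ℕ) := by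
            have : ((∑ i ∈ Finset.range (m - n), X (i + n) ω : ℕ) : ℤ) < ((m - n : ℕ) : ℤ) := by
              exact_mod_cast h2
            simpa [Nat.cast_sum] using this
          omega
        · intro h j hj
          have := h (n + j) (by omega)
          rw [hkey n j] at this
          have h3 : (∑ i ∈ Finset.range j, (X (i + n) ω : ℤ)) < (j : ℤ) := by omega
          have : ((∑ i ∈ Finset.range j, X (i + n) ω : ℕ) : ℤ) < ((j : ℕ) : ℤ) := by
            simpa [Nat.cast_sum] using h3
          exact_mod_cast this
      -- convert lcount to the indicator sums
      have hFval : ∀ N : ℕ, 1 ≤ N → F N ω = ENNReal.ofReal ((lcount u N : ℝ) / N) := by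
        intro N hN
        have hsum : ∑ n ∈ Finset.range N, (A n).indicator (fun _ => (1:ℝ≥0∞)) ω
            = ENNReal.ofReal ((lcount u N : ℝ)) := by
          have : ((lcount u N : ℤ) : ℝ)
              = ∑ n ∈ Finset.range N, (if ∀ m, n < m → u n < u m then (1:ℝ) else 0) := by
            rw [lcount]
            push_cast
            exact Finset.sum_congr rfl (fun n _ => by split_ifs <;> norm_num
            )
          rw [this, ENNReal.ofReal_sum_of_nonneg (fun n _ => by positivity)]
          refine Finset.sum_congr rfl (fun n _ => ?_)
          rw [Set.indicator_apply]
          rw [if_congr (hmem n) rfl rfl]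
          split_ifs <;> simp
        rw [hF]
        simp only
        rw [hsum, ENNReal.ofReal_div_of_pos (by exact_mod_cast (by omega : 0 < N)),
          ENNReal.ofReal_natCast, div_eq_mul_inv, mul_comm]
      have h3 : Tendsto (fun N => ENNReal.ofReal ((lcount u N : ℝ) / N)) atTop
          (𝓝 (ENNReal.ofReal M)) := ENNReal.tendsto_ofReal hdet
      refine h3.congr' ?_
      filter_upwards [eventually_ge_atTop 1] with N hN
      exact (hFval N hN).symm
    -- dominated convergence
    have hdct := tendsto_lintegral_of_dominated_convergence (fun _ => (1:ℝ≥0∞))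
      hFmeas (fun N => Filter.Eventually.of_forall (fun ω => hFbound N ω))
      (by simp) hlim
    rw [lintegral_const] at hdct
    simp only [measure_univ, mul_one] at hdct
    have hconst : Tendsto (fun N : ℕ => ∫⁻ ω, F N ω ∂μ) atTop (𝓝 p) := by
      refine Tendsto.congr' ?_ tendsto_const_nhds
      filter_upwards [eventually_ge_atTop 1] with N hN
      exact (hFint N hN).symm
    exact tendsto_nhds_unique hconst hdct
  -- Step 2 : splitting the event
  have hsplit : seq 0 ⁻¹' EA = (X 0 ⁻¹' {0}) ∩ (seq 1 ⁻¹' EB) := by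
    ext ω
    simp only [Set.mem_preimage, Set.mem_inter_iff, Set.mem_singleton_iff, hEA, hEB,
      Set.mem_setOf_eq, hseq, Nat.add_zero]
    constructor
    · intro h
      have h0 : X 0 ω = 0 := by
        have := h 1 le_rfl
        simpa using this
      refine ⟨h0, fun j hj => ?_⟩
      have := h (j + 1) (by omega)
      rw [Finset.sum_range_succ'] at this
      omega
    · rintro ⟨h0, h⟩ j hj
      obtain ⟨j', rfl⟩ : ∃ j', j = j' + 1 := ⟨j - 1, by omega⟩
      rw [Finset.sum_range_succ']
      simp only [Nat.zero_add, h0, add_zero]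
      rcases Nat.eq_zero_or_pos j' with h0' | hpos
      · simp [h0']
      · have := h j' (by omega)
        omega
  -- Step 3 : independence
  have hIndepSets : μ ((X 0 ⁻¹' {0}) ∩ (seq 1 ⁻¹' EB))
      = μ (X 0 ⁻¹' {0}) * μ (seq 1 ⁻¹' EB) := by
    have hdisj : Disjoint ({0} : Set ℕ) {i : ℕ | 1 ≤ i} := by
      rw [Set.disjoint_left]
      rintro a ha hb
      simp at ha hb
      omega
    have hInd := indep_iSup_of_disjoint
      (fun i => (hmeas i).comap_le) hindep hdisj
    have hs : MeasurableSet[⨆ i ∈ ({0} : Set ℕ),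
        MeasurableSpace.comap (X i) inferInstance] (X 0 ⁻¹' {0}) := by
      have hX0 : Measurable[⨆ i ∈ ({0} : Set ℕ),
          MeasurableSpace.comap (X i) inferInstance] (X 0) :=
        measurable_iff_comap_le.2
          (le_biSup (f := fun i => MeasurableSpace.comap (X i) inferInstance)
            (Set.mem_singleton 0))
      exact hX0 MeasurableSet.of_discrete
    have ht : MeasurableSet[⨆ i ∈ {i : ℕ | 1 ≤ i},
        MeasurableSpace.comap (X i) inferInstance] (seq 1 ⁻¹' EB) := by
      have hrw : seq 1 ⁻¹' EB
          = ⋂ j : ℕ, (fun ω => ∑ i ∈ Finset.range j, X (i + 1) ω) ⁻¹' {k | 1 ≤ j → k ≤ j} := by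
        ext ω
        simp [hseq, hEB]
      rw [hrw]
      refine MeasurableSet.iInter (fun j => ?_)
      have hsum : Measurable[⨆ i ∈ {i : ℕ | 1 ≤ i},
          MeasurableSpace.comap (X i) inferInstance]
          (fun ω => ∑ i ∈ Finset.range j, X (i + 1) ω) := by
        refine Finset.measurable_sum _ (fun i _ => ?_)
        refine measurable_iff_comap_le.2 ?_
        exact le_biSup (f := fun i => MeasurableSpace.comap (X i) inferInstance)
          (by simp : (i + 1) ∈ {i : ℕ | 1 ≤ i})
      exact hsum MeasurableSet.of_discrete
    exact (hInd.indepSet_of_measurableSet hs ht).measure_inter_eq_mul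
  -- Step 4 : putting everything together
  have htarget : {ω | ∀ n, 1 ≤ n → ∑ k ∈ Finset.range n, X k ω ≤ n} = seq 0 ⁻¹' EB := by
    ext ω
    simp [hseq, hEB]
  have hBshift : μ (seq 1 ⁻¹' EB) = μ (seq 0 ⁻¹' EB) :=
    shift_invariant μ X hmeas hindep hident 1 hEBmeas
  have hzero' : μ (X 0 ⁻¹' {0}) = ENNReal.ofReal (1 - α) := by
    rw [← hzero]; rfl
  have hfin : ENNReal.ofReal M = ENNReal.ofReal (1 - α) * μ (seq 0 ⁻¹' EB) := by
    calc ENNReal.ofReal M = p := hp.symm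
    _ = μ ((X 0 ⁻¹' {0}) ∩ (seq 1 ⁻¹' EB)) := by rw [hp0, hsplit]
    _ = μ (X 0 ⁻¹' {0}) * μ (seq 1 ⁻¹' EB) := hIndepSets
    _ = ENNReal.ofReal (1 - α) * μ (seq 0 ⁻¹' EB) := by rw [hzero', hBshift]
  rw [htarget, ENNReal.ofReal_div_of_pos h1α,
    ENNReal.eq_div_iff (ne_of_gt (ENNReal.ofReal_pos.2 h1α)) ENNReal.ofReal_ne_top]
  exact hfin.symm
end
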